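/- arXiv:1304.4776 — 7 statements merged into one kernel-verified Lean document; each statement's English description precedes it below -/
import Mathlib

section
/- For any cluster seed (x, B) with x an N-tuple of elements of a field and B an N×N skew-symmetric integer matrix, and for any index k ∈ {1, ..., N}, the mutation μ_k is involutive: μ_k(μ_k(x, B)) = (x, B). -/
open Finset

/-- A cluster seed: an `N`-tuple of cluster variables in a field `F`, together with
an `N × N` integer exchange matrix. -/
abbrev Seed (F : Type*) (N : ℕ) : Type _ := (Fin N → F) × Matrix (Fin N) (Fin N) ℤ

variable {F : Type*} [Field F] {N : ℕ}

/-- Mutation of the cluster variables in direction `k`: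
`x̃_k = (∏_{j : b_{jk} > 0} x_j^{b_{jk}} + ∏_{j : b_{jk} < 0} x_j^{-b_{jk}}) / x_k`,
and `x̃_i = x_i` for `i ≠ k`. -/
noncomputable def mutateX (s : Seed F N) (k : Fin N) : Fin N → F := fun i =>
  if i = k then
    ((∏ j, s.1 j ^ (s.2 j k).toNat) + ∏ j, s.1 j ^ (-s.2 j k).toNat) / s.1 k
  else s.1 i

/-- Mutation of the exchange matrix in direction `k`. -/
def mutateB (B : Matrix (Fin N) (Fin N) ℤ) (k : Fin N) : Matrix (Fin N) (Fin N) ℤ :=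
  Matrix.of fun i j =>
    if i = k ∨ j = k then -B i j
    else B i j + ((B i k).natAbs * B k j + B i k * (B k j).natAbs) / 2

/-- Mutation `μ_k` of a seed in direction `k`. -/
noncomputable def mutate (s : Seed F N) (k : Fin N) : Seed F N :=
  (mutateX s k, mutateB s.2 k)

/-- The operation `s_{i,j}` transposing the `i`-th and `j`-th entries of the cluster
variable tuple and simultaneously the `i`-th and `j`-th rows and columns of the
exchange matrix. -/
def swapSeed (i j : Fin N) (s : Seed F N) : Seed F N :=
  (s.1 ∘ Equiv.swap i j, Matrix.of fun a b => s.2 (Equiv.swap i j a) (Equiv.swap i j b))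

/-- The `y`-variables of a seed: `y_j = ∏_k x_k^{b_{kj}}`. -/
noncomputable def yvar (s : Seed F N) : Fin N → F := fun j => ∏ k, s.1 k ^ (s.2 k j)

lemma even_aux (a b : ℤ) : (2:ℤ) ∣ (|a| * b + a * |b|) := by
  rcases abs_choice a with h1|h1 <;> rcases abs_choice b with h2|h2 <;> rw [h1, h2]
  · exact ⟨a*b, by ring⟩
  · exact ⟨0, by ring⟩
  · exact ⟨0, by ring⟩
  · exact ⟨-(a*b), by ring⟩

lemma mutateB_involutive (B : Matrix (Fin N) (Fin N) ℤ) (k : Fin N) :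
    mutateB (mutateB B k) k = B := by
  ext i j
  by_cases h : i = k ∨ j = k
  · simp [mutateB, h]
  · push_neg at h
    obtain ⟨hi, hj⟩ := h
    simp only [mutateB, Matrix.of_apply, hi, hj, Int.natAbs_neg]
    norm_num
    obtain ⟨c, hc⟩ := even_aux (B i k) (B k j)
    have h2 : -(|B i k| * B k j) + -(B i k * |B k j|) = 2 * (-c) := by omega
    rw [hc, h2, Int.mul_ediv_cancel_left _ two_ne_zero, Int.mul_ediv_cancel_left _ two_ne_zero]
    ring

/-- For any cluster seed `(x, B)` with `x` an `N`-tuple of algebraically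
independent elements of a field and `B` an `N × N` skew-symmetric integer matrix, and any
index `k`, the mutation `μ_k` is involutive: `μ_k (μ_k (x, B)) = (x, B)`. -/
theorem mutation_involutive {F : Type*} [Field F] {N : ℕ}
    (x : Fin N → F) (hx : AlgebraicIndependent ℤ x)
    (B : Matrix (Fin N) (Fin N) ℤ) (hB : B.transpose = -B) (k : Fin N) :
    mutate (mutate (x, B) k) k = (x, B) := by
  have hkk : B k k = 0 := by
    have := congrFun (congrFun hB k) k
    simp [Matrix.transpose_apply] at this
    omega
  have hxk : x k ≠ 0 := by
    intro h
    have h1 : (MvPolynomial.aeval x) (MvPolynomial.X k : MvPolynomial (Fin N) ℤ)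
        = (MvPolynomial.aeval x) (0 : MvPolynomial (Fin N) ℤ) := by
      rw [map_zero, MvPolynomial.aeval_X, h]
    exact MvPolynomial.X_ne_zero k (hx h1)
  have hmono : ∀ e : Fin N → ℕ,
      (∏ j, (MvPolynomial.X j : MvPolynomial (Fin N) ℤ) ^ e j)
        = MvPolynomial.monomial (Finsupp.equivFunOnFinite.symm e) 1 := by
    intro e
    rw [MvPolynomial.monomial_eq, map_one, one_mul, Finsupp.prod]
    refine (Finset.prod_subset (Finset.subset_univ _) ?_).symm
    intro j _ hj
    rw [Finsupp.mem_support_iff, not_not] at hj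
    rw [show e j = 0 from hj, pow_zero]
  have hne : ∀ d1 d2 : Fin N → ℕ,
      (∏ j, x j ^ d1 j) + (∏ j, x j ^ d2 j) ≠ 0 := by
    intro d1 d2 h0
    set P : MvPolynomial (Fin N) ℤ :=
      (∏ j, MvPolynomial.X j ^ d1 j) + ∏ j, MvPolynomial.X j ^ d2 j with hP
    have hPval : (MvPolynomial.aeval x) P = (MvPolynomial.aeval x) (0 : MvPolynomial (Fin N) ℤ) := by
      rw [map_zero]
      simp only [hP, map_add, map_prod, map_pow, MvPolynomial.aeval_X]
      exact h0
    have hP0 : P = 0 := hx hPval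
    have hco := congrArg (MvPolynomial.coeff (Finsupp.equivFunOnFinite.symm d1)) hP0
    rw [hP, hmono d1, hmono d2] at hco
    simp only [MvPolynomial.coeff_add, MvPolynomial.coeff_monomial, MvPolynomial.coeff_zero] at hco
    split_ifs at hco <;> omega
  have hprod : ∀ (e : Fin N → ℕ), e k = 0 →
      ∏ j, (mutateX (x, B) k) j ^ e j = ∏ j, x j ^ e j := by
    intro e he
    refine Finset.prod_congr rfl fun j _ => ?_
    by_cases hj : j = k
    · subst hj; simp [he]
    · simp [mutateX, hj]
  refine Prod.ext ?_ (mutateB_involutive B k)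
  show mutateX (mutate (x, B) k) k = x
  funext i
  by_cases hi : i = k
  · rw [hi]
    have hBk : ∀ j, (mutateB B k) j k = -B j k := by
      intro j; simp [mutateB]
    have h1 : ∏ j, (mutateX (x, B) k) j ^ ((mutateB B k) j k).toNat
        = ∏ j, x j ^ (-B j k).toNat := by
      rw [Finset.prod_congr rfl fun j _ => by rw [hBk j]]
      exact hprod _ (by simp [hkk])
    have h2 : ∏ j, (mutateX (x, B) k) j ^ (-(mutateB B k) j k).toNat
        = ∏ j, x j ^ (B j k).toNat := by
      rw [Finset.prod_congr rfl fun j _ => by rw [hBk j, neg_neg]]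
      exact hprod _ (by simp [hkk])
    rw [show mutateX (mutate (x, B) k) k k
        = ((∏ j, (mutateX (x, B) k) j ^ ((mutateB B k) j k).toNat)
          + ∏ j, (mutateX (x, B) k) j ^ (-(mutateB B k) j k).toNat)
          / (mutateX (x, B) k) k from by
        rw [mutateX]; simp only [mutate]; rw [if_pos trivial]]
    rw [h1, h2]
    have hXk : mutateX (x, B) k k
        = ((∏ j, x j ^ (B j k).toNat) + ∏ j, x j ^ (-B j k).toNat) / x k := by
      simp [mutateX]
    rw [hXk, add_comm, div_div_eq_mul_div, mul_comm, mul_div_assoc, div_self (hne _ _), mul_one]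
  · simp [mutateX, mutate, hi]
end

section
/- For any cluster seed (x, B) and indices j, k with b_{jk} = 0, the mutations commute: μ_j(μ_k(x, B)) = μ_k(μ_j(x, B)). -/
open Finset

variable {F : Type*} [Field F] {N : ℕ}

/-- For any cluster seed `(x, B)` and indices `j, k` with `b_{jk} = 0`,
the mutations commute: `μ_j (μ_k (x, B)) = μ_k (μ_j (x, B))`. -/
theorem mutations_commute {F : Type*} [Field F] {N : ℕ}
    (x : Fin N → F) (hx : AlgebraicIndependent ℤ x)
    (B : Matrix (Fin N) (Fin N) ℤ) (hB : B.transpose = -B)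
    (j k : Fin N) (hjk : B j k = 0) :
    mutate (mutate (x, B) k) j = mutate (mutate (x, B) j) k := by

  rcases eq_or_ne j k with rfl | hne
  · rfl
  have hkj : B k j = 0 := by
    have h := congrFun (congrFun hB j) k
    simp [Matrix.transpose_apply, hjk] at h
    exact h
  -- column/row lemmas for mutation at k
  have hcol1 : ∀ a, mutateB B k a j = if a = k then 0 else B a j := by
    intro a
    by_cases hak : a = k <;> simp [mutateB, hak, hne, hkj]
  have hcol2 : ∀ a, mutateB B j a k = if a = j then 0 else B a k := by
    intro a
    by_cases haj : a = j <;> simp [mutateB, haj, hne.symm, hjk]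
  -- the matrix part
  have hmat : mutateB (mutateB B k) j = mutateB (mutateB B j) k := by
    ext a b
    simp only [mutateB, Matrix.of_apply]
    by_cases haj : a = j <;> by_cases hak : a = k <;>
      by_cases hbj : b = j <;> by_cases hbk : b = k <;>
      simp [hne, hne.symm, haj, hak, hbj, hbk, hjk, hkj] <;>
      ring
  -- product lemmas for the cluster variables
  have hprod1 : (∏ t, mutateX (x, B) k t ^ (mutateB B k t j).toNat)
      = ∏ t, x t ^ (B t j).toNat := by
    refine Finset.prod_congr rfl fun t _ => ?_
    by_cases htk : t = k
    · subst htk; simp [hcol1, hkj]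
    · simp [mutateX, htk, hcol1]
  have hprod1' : (∏ t, mutateX (x, B) k t ^ (-mutateB B k t j).toNat)
      = ∏ t, x t ^ (-B t j).toNat := by
    refine Finset.prod_congr rfl fun t _ => ?_
    by_cases htk : t = k
    · subst htk; simp [hcol1, hkj]
    · simp [mutateX, htk, hcol1]
  have hprod2 : (∏ t, mutateX (x, B) j t ^ (mutateB B j t k).toNat)
      = ∏ t, x t ^ (B t k).toNat := by
    refine Finset.prod_congr rfl fun t _ => ?_
    by_cases htj : t = j
    · subst htj; simp [hcol2, hjk]
    · simp [mutateX, htj, hcol2]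
  have hprod2' : (∏ t, mutateX (x, B) j t ^ (-mutateB B j t k).toNat)
      = ∏ t, x t ^ (-B t k).toNat := by
    refine Finset.prod_congr rfl fun t _ => ?_
    by_cases htj : t = j
    · subst htj; simp [hcol2, hjk]
    · simp [mutateX, htj, hcol2]
  have hX' : mutateX (mutate (x, B) k) j = mutateX (mutate (x, B) j) k := by
    funext i
    by_cases hij : i = j
    · have hik : i ≠ k := fun h => hne (hij ▸ h)
      have l : mutateX (mutate (x, B) k) j i
          = ((∏ t, mutateX (x, B) k t ^ (mutateB B k t j).toNat)
            + ∏ t, mutateX (x, B) k t ^ (-mutateB B k t j).toNat) / mutateX (x, B) k j := by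
        simp [mutate, mutateX, hij]
      have lx : mutateX (x, B) k j = x j := by simp [mutateX, hne]
      have r : mutateX (mutate (x, B) j) k i = mutateX (x, B) j i := by
        simp [mutate, mutateX, hik]
      have r2 : mutateX (x, B) j i
          = ((∏ t, x t ^ (B t j).toNat) + ∏ t, x t ^ (-B t j).toNat) / x j := by
        simp [mutateX, hij]
      rw [l, lx, hprod1, hprod1', r, r2]
    · by_cases hik : i = k
      · have l : mutateX (mutate (x, B) k) j i = mutateX (x, B) k i := by
          simp [mutate, mutateX, hij]
        have l2 : mutateX (x, B) k i
            = ((∏ t, x t ^ (B t k).toNat) + ∏ t, x t ^ (-B t k).toNat) / x k := by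
          simp [mutateX, hik]
        have r : mutateX (mutate (x, B) j) k i
            = ((∏ t, mutateX (x, B) j t ^ (mutateB B j t k).toNat)
              + ∏ t, mutateX (x, B) j t ^ (-mutateB B j t k).toNat) / mutateX (x, B) j k := by
          simp [mutate, mutateX, hik]
        have rx : mutateX (x, B) j k = x k := by simp [mutateX, hne.symm]
        rw [l, l2, r, rx, hprod2, hprod2']
      · simp [mutate, mutateX, hij, hik]
  show (mutateX (mutate (x, B) k) j, mutateB (mutateB B k) j)
      = (mutateX (mutate (x, B) j) k, mutateB (mutateB B j) k)
  rw [hX', hmat]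
end

section
/- Let (x, B) be a cluster seed with y-variables y_j = ∏_k x_k^{b_{kj}}, let (x̃, B̃) = μ_k(x, B), and set ỹ_j = ∏_i x̃_i^{b̃_{ij}}. Then ỹ_k = y_k^{-1}; for i ≠ k with b_{ki} ≥ 0, ỹ_i = y_i (1 + y_k^{-1})^{-b_{ki}}; and for i ≠ k with b_{ki} ≤ 0, ỹ_i = y_i (1 + y_k)^{-b_{ki}}. -/
open Finset

variable {F : Type*} [Field F] {N : ℕ}

private lemma div2_nonneg (b c : ℤ) (hc : 0 ≤ c) :
    ((b.natAbs : ℤ) * c + b * (c.natAbs : ℤ)) / 2 = c * (b.toNat : ℤ) := by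
  rcases le_or_gt 0 b with hb | hb
  · have h1 : (b.natAbs : ℤ) = b := by omega
    have h2 : (b.toNat : ℤ) = b := by omega
    have h3 : (c.natAbs : ℤ) = c := by omega
    rw [h1, h2, h3, show b * c + b * c = 2 * (c * b) by ring,
      Int.mul_ediv_cancel_left _ two_ne_zero]
  · have h1 : (b.natAbs : ℤ) = -b := by omega
    have h2 : (b.toNat : ℤ) = 0 := by omega
    have h3 : (c.natAbs : ℤ) = c := by omega
    rw [h1, h2, h3, show -b * c + b * c = 0 by ring]
    simp

private lemma div2_nonpos (b c : ℤ) (hc : c ≤ 0) :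
    ((b.natAbs : ℤ) * c + b * (c.natAbs : ℤ)) / 2 = c * ((-b).toNat : ℤ) := by
  rcases le_or_gt 0 b with hb | hb
  · have h1 : (b.natAbs : ℤ) = b := by omega
    have h2 : ((-b).toNat : ℤ) = 0 := by omega
    have h3 : (c.natAbs : ℤ) = -c := by omega
    rw [h1, h2, h3, show b * c + b * -c = 0 by ring]
    simp
  · have h1 : (b.natAbs : ℤ) = -b := by omega
    have h2 : ((-b).toNat : ℤ) = -b := by omega
    have h3 : (c.natAbs : ℤ) = -c := by omega
    rw [h1, h2, h3, show -b * c + b * -c = 2 * (c * -b) by ring,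
      Int.mul_ediv_cancel_left _ two_ne_zero]

private lemma yvar_mutate_aux {F : Type*} [Field F] {N : ℕ}
    (x : Fin N → F) (hx0 : ∀ j, x j ≠ 0)
    (B : Matrix (Fin N) (Fin N) ℤ) (k i : Fin N) (hik : i ≠ k)
    (e : Fin N → ℤ) (hek : e k = 0)
    (hmut : ∀ l, l ≠ k → mutateB B k l i = B l i + B k i * e l) :
    yvar (mutate (x, B) k) i
      = yvar (x, B) i *
        (((∏ j, x j ^ (B j k).toNat) + ∏ j, x j ^ (-B j k).toNat)
          / ∏ l, x l ^ e l) ^ (-B k i) := by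
  set a := B k i with ha
  set P : F := ∏ j, x j ^ (B j k).toNat with hP
  set M : F := ∏ j, x j ^ (-B j k).toNat with hM
  set Q : F := ∏ l, x l ^ e l with hQ
  have hsplit : yvar (mutate (x, B) k) i
      = mutateX (x, B) k k ^ mutateB B k k i
        * ∏ l ∈ univ.erase k, mutateX (x, B) k l ^ mutateB B k l i :=
    (Finset.mul_prod_erase univ _ (mem_univ k)).symm
  have hXk : mutateX (x, B) k k = (P + M) / x k := by simp [mutateX, hP, hM]
  have hBkk' : mutateB B k k i = -a := by simp [mutateB, ha]
  have hprod : ∏ l ∈ univ.erase k, mutateX (x, B) k l ^ mutateB B k l i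
      = (∏ l ∈ univ.erase k, x l ^ B l i) * (∏ l ∈ univ.erase k, x l ^ e l) ^ a := by
    rw [← Finset.prod_zpow, ← Finset.prod_mul_distrib]
    refine Finset.prod_congr rfl fun l hl => ?_
    have hlk : l ≠ k := (Finset.mem_erase.mp hl).1
    rw [show mutateX (x, B) k l = x l by simp [mutateX, hlk],
        hmut l hlk, zpow_add₀ (hx0 l), mul_comm a (e l), zpow_mul]
  have hQ' : ∏ l ∈ univ.erase k, x l ^ e l = Q := by
    rw [hQ, ← Finset.mul_prod_erase univ _ (mem_univ k), hek, zpow_zero, one_mul]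
  have hyi : ∏ l ∈ univ.erase k, x l ^ B l i = yvar (x, B) i * x k ^ (-a) := by
    have h1 : yvar (x, B) i = x k ^ a * ∏ l ∈ univ.erase k, x l ^ B l i :=
      (Finset.mul_prod_erase univ _ (mem_univ k)).symm
    rw [h1, mul_comm (x k ^ a), mul_assoc, ← zpow_add₀ (hx0 k), add_neg_cancel,
        zpow_zero, mul_one]
  have hxa : x k ^ a * x k ^ (-a) = 1 := by
    rw [← zpow_add₀ (hx0 k), add_neg_cancel, zpow_zero]
  have hdz : ∀ u v : F, (u / v) ^ (-a) = u ^ (-a) * v ^ a := by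
    intro u v
    rw [div_zpow, zpow_neg v a, div_eq_mul_inv, inv_inv]
  rw [hsplit, hXk, hBkk', hprod, hQ', hyi, hdz, hdz]
  linear_combination (yvar (x, B) i * (P + M) ^ (-a) * Q ^ a) * hxa

/-- Let `(x, B)` be a cluster seed with `y`-variables `y_j = ∏_k x_k^{b_{kj}}`,
let `(x̃, B̃) = μ_k (x, B)` and `ỹ_j = ∏_i x̃_i^{b̃_{ij}}`.  Then `ỹ_k = y_k⁻¹`;
for `i ≠ k` with `b_{ki} ≥ 0`, `ỹ_i = y_i (1 + y_k⁻¹)^{-b_{ki}}`; and for `i ≠ k` with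
`b_{ki} ≤ 0`, `ỹ_i = y_i (1 + y_k)^{-b_{ki}}`. -/
theorem y_variable_mutation {F : Type*} [Field F] {N : ℕ}
    (x : Fin N → F) (hx : AlgebraicIndependent ℤ x)
    (B : Matrix (Fin N) (Fin N) ℤ) (hB : B.transpose = -B) (k : Fin N) :
    yvar (mutate (x, B) k) k = (yvar (x, B) k)⁻¹ ∧
    (∀ i, i ≠ k → 0 ≤ B k i →
      yvar (mutate (x, B) k) i
        = yvar (x, B) i * (1 + (yvar (x, B) k)⁻¹) ^ (-(B k i))) ∧
    (∀ i, i ≠ k → B k i ≤ 0 →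
      yvar (mutate (x, B) k) i
        = yvar (x, B) i * (1 + yvar (x, B) k) ^ (-(B k i))) := by
  have hx0 : ∀ j, x j ≠ 0 := fun j => hx.ne_zero j
  have hBkk : B k k = 0 := by
    have := congrFun (congrFun hB k) k
    simp only [Matrix.transpose_apply, Matrix.neg_apply] at this
    omega
  have hP : (∏ j, x j ^ (B j k).toNat : F) ≠ 0 :=
    Finset.prod_ne_zero_iff.mpr fun l _ => pow_ne_zero _ (hx0 l)
  have hM : (∏ j, x j ^ (-B j k).toNat : F) ≠ 0 :=
    Finset.prod_ne_zero_iff.mpr fun l _ => pow_ne_zero _ (hx0 l)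
  have hyk : yvar (x, B) k
      = (∏ j, x j ^ (B j k).toNat) / ∏ j, x j ^ (-B j k).toNat := by
    show (∏ l, x l ^ B l k) = _
    rw [← Finset.prod_div_distrib]
    refine Finset.prod_congr rfl fun l _ => ?_
    rw [← zpow_natCast (x l) (B l k).toNat, ← zpow_natCast (x l) (-B l k).toNat,
        ← zpow_sub₀ (hx0 l)]
    congr 1
    omega
  refine ⟨?_, ?_, ?_⟩
  · show (∏ l, mutateX (x, B) k l ^ mutateB B k l k) = (∏ l, x l ^ B l k)⁻¹
    rw [← Finset.prod_inv_distrib]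
    refine Finset.prod_congr rfl fun l _ => ?_
    have hB' : mutateB B k l k = -B l k := by simp [mutateB]
    rw [hB', ← zpow_neg]
    by_cases hlk : l = k
    · subst hlk; simp [hBkk]
    · simp [mutateX, hlk]
  · intro i hik hpos
    have hmut : ∀ l, l ≠ k → mutateB B k l i = B l i + B k i * ((B l k).toNat : ℤ) := by
      intro l hlk
      have h : mutateB B k l i
          = B l i + ((B l k).natAbs * B k i + B l k * (B k i).natAbs) / 2 := by
        simp [mutateB, hlk, hik]
      rw [h, div2_nonneg _ _ hpos]
    have haux := yvar_mutate_aux x hx0 B k i hik (fun l => ((B l k).toNat : ℤ))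
      (by simp [hBkk]) hmut
    have hPz : (∏ l, x l ^ ((B l k).toNat : ℤ)) = ∏ j, x j ^ (B j k).toNat :=
      Finset.prod_congr rfl fun l _ => zpow_natCast _ _
    rw [haux, hPz, hyk]
    congr 2
    rw [inv_div, add_div, div_self hP]
  · intro i hik hneg
    have hmut : ∀ l, l ≠ k → mutateB B k l i = B l i + B k i * ((-B l k).toNat : ℤ) := by
      intro l hlk
      have h : mutateB B k l i
          = B l i + ((B l k).natAbs * B k i + B l k * (B k i).natAbs) / 2 := by
        simp [mutateB, hlk, hik]
      rw [h, div2_nonpos _ _ hneg]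
    have haux := yvar_mutate_aux x hx0 B k i hik (fun l => ((-B l k).toNat : ℤ))
      (by simp [hBkk]) hmut
    have hMz : (∏ l, x l ^ ((-B l k).toNat : ℤ)) = ∏ j, x j ^ (-B j k).toNat :=
      Finset.prod_congr rfl fun l _ => zpow_natCast _ _
    rw [haux, hMz, hyk]
    congr 2
    rw [add_div, div_self hM, add_comm]
end

section
/- The 7×7 exchange matrix B with rows (0,1,-1,0,0,0,0), (-1,0,0,1,0,0,0), (1,0,0,-1,0,0,0), (0,-1,1,0,1,-1,0), (0,0,0,-1,0,0,1), (0,0,0,1,0,0,-1), (0,0,0,0,-1,1,0) is invariant under the R-operator: if (x̃, B̃) = R(x, B), then B̃ = B; likewise for R^{-1}. -/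
open Finset

variable {F : Type*} [Field F] {N : ℕ}

/-- The 7×7 exchange matrix of the paper (indices written 0-based). -/
def B7 : Matrix (Fin 7) (Fin 7) ℤ :=
  !![0, 1, -1, 0, 0, 0, 0;
     -1, 0, 0, 1, 0, 0, 0;
     1, 0, 0, -1, 0, 0, 0;
     0, -1, 1, 0, 1, -1, 0;
     0, 0, 0, -1, 0, 0, 1;
     0, 0, 0, 1, 0, 0, -1;
     0, 0, 0, 0, -1, 1, 0]

/-- The R-operator `R = s_{3,5} ∘ s_{2,5} ∘ s_{3,6} ∘ μ_4 ∘ μ_2 ∘ μ_6 ∘ μ_4`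
(applied right to left; indices here are 0-based, so `μ_4` is `mutate · 3`, etc.). -/
noncomputable def Rop7 (s : Seed F 7) : Seed F 7 :=
  swapSeed 2 4 (swapSeed 1 4 (swapSeed 2 5
    (mutate (mutate (mutate (mutate s 3) 5) 1) 3)))

/-- The inverse R-operator `R⁻¹ = s_{3,6} ∘ s_{2,5} ∘ s_{3,5} ∘ μ_4 ∘ μ_5 ∘ μ_3 ∘ μ_4`
(applied right to left; 0-based indices). -/
noncomputable def Rinv7 (s : Seed F 7) : Seed F 7 :=
  swapSeed 2 5 (swapSeed 1 4 (swapSeed 2 4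
    (mutate (mutate (mutate (mutate s 3) 2) 4) 3)))


def swapB (i j : Fin 7) (B : Matrix (Fin 7) (Fin 7) ℤ) : Matrix (Fin 7) (Fin 7) ℤ :=
  Matrix.of fun a b => B (Equiv.swap i j a) (Equiv.swap i j b)

lemma mutate_snd (s : Seed F N) (k : Fin N) : (mutate s k).2 = mutateB s.2 k := rfl

lemma swapSeed_snd (i j : Fin 7) (s : Seed F 7) :
    (swapSeed i j s).2 = swapB i j s.2 := rfl

/-- The 7×7 exchange matrix `B7` is invariant under the R-operator:
if `(x̃, B̃) = R(x, B7)` then `B̃ = B7`, and likewise for `R⁻¹`. -/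
theorem B7_invariant_under_R {F : Type*} [Field F]
    (x : Fin 7 → F) (hx : AlgebraicIndependent ℤ x) :
    (Rop7 (x, B7)).2 = B7 ∧ (Rinv7 (x, B7)).2 = B7 := by
  constructor <;>
  · simp only [Rop7, Rinv7, swapSeed_snd, mutate_snd]
    decide
end

section
/- On seeds (x, B) with x = (x_1, ..., x_7) and B the 7×7 exchange matrix with rows (0,1,-1,0,0,0,0), (-1,0,0,1,0,0,0), (1,0,0,-1,0,0,0), (0,-1,1,0,1,-1,0), (0,0,0,-1,0,0,1), (0,0,0,1,0,0,-1), (0,0,0,0,-1,1,0), the R-operator admits the alternative expression R = s_{2,5} ∘ s_{3,6} ∘ μ_2 ∘ μ_6 ∘ μ_4 ∘ μ_2 ∘ μ_6; that is, s_{2,5} ∘ s_{3,6} ∘ μ_2 ∘ μ_6 ∘ μ_4 ∘ μ_2 ∘ μ_6 (x, B) = s_{3,5} ∘ s_{2,5} ∘ s_{3,6} ∘ μ_4 ∘ μ_2 ∘ μ_6 ∘ μ_4 (x, B). -/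
open Finset

variable {F : Type*} [Field F] {N : ℕ}

@[simp] lemma cv5a {α : Type*} (a : α) (u : Fin 6 → α) : Matrix.vecCons a u (5 : Fin 7) = u 4 := rfl
@[simp] lemma cv6a {α : Type*} (a : α) (u : Fin 6 → α) : Matrix.vecCons a u (6 : Fin 7) = u 5 := rfl
@[simp] lemma cv5b {α : Type*} (a : α) (u : Fin 5 → α) : Matrix.vecCons a u (5 : Fin 6) = u 4 := rfl

open MvPolynomial in
lemma indep_ne {F : Type*} [Field F] {x : Fin 7 → F} (hx : AlgebraicIndependent ℤ x)
    (p : MvPolynomial (Fin 7) ℤ) (h : MvPolynomial.eval (fun _ => (1:ℤ)) p ≠ 0) :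
    MvPolynomial.aeval x p ≠ 0 := by
  intro h0
  apply h
  have : p = 0 := hx (show aeval x p = aeval x 0 by simpa using h0)
  simp [this]

def BL1 : Matrix (Fin 7) (Fin 7) ℤ :=
  !![0, 1, -1, 0, 0, 0, 0;
     -1, 0, 0, 1, 0, 0, 0;
     1, 0, 0, -1, 0, 0, 0;
     0, -1, 1, 0, 1, 1, -1;
     0, 0, 0, -1, 0, 0, 1;
     0, 0, 0, -1, 0, 0, 1;
     0, 0, 0, 1, -1, -1, 0]

lemma stepL1 {F : Type*} [Field F] (x : Fin 7 → F) :
    mutate ((x : Fin 7 → F), B7) 5 =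
    (![x 0, x 1, x 2, x 3, x 4, (((x 6)) + ((x 3))) / (x 5), x 6], BL1) := by
  refine Prod.ext ?_ (show mutateB B7 5 = BL1 by decide)
  funext i
  fin_cases i <;>
    (simp [mutate, mutateX, Fin.prod_univ_seven, B7, Matrix.of_apply, -Matrix.vecCons_const]; try ring)

def BL2 : Matrix (Fin 7) (Fin 7) ℤ :=
  !![0, -1, -1, 1, 0, 0, 0;
     1, 0, 0, -1, 0, 0, 0;
     1, 0, 0, -1, 0, 0, 0;
     -1, 1, 1, 0, 1, 1, -1;
     0, 0, 0, -1, 0, 0, 1;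
     0, 0, 0, -1, 0, 0, 1;
     0, 0, 0, 1, -1, -1, 0]

lemma stepL2 {F : Type*} [Field F] (x : Fin 7 → F) :
    mutate ((![x 0, x 1, x 2, x 3, x 4, (((x 6)) + ((x 3))) / (x 5), x 6] : Fin 7 → F), BL1) 1 =
    (![x 0, (((x 0)) + ((x 3))) / (x 1), x 2, x 3, x 4, (((x 6)) + ((x 3))) / (x 5), x 6], BL2) := by
  refine Prod.ext ?_ (show mutateB BL1 1 = BL2 by decide)
  funext i
  fin_cases i <;>
    (simp [mutate, mutateX, Fin.prod_univ_seven, BL1, Matrix.of_apply, -Matrix.vecCons_const]; try ring)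

def BL3 : Matrix (Fin 7) (Fin 7) ℤ :=
  !![0, 0, 0, -1, 1, 1, 0;
     0, 0, 0, 1, 0, 0, -1;
     0, 0, 0, 1, 0, 0, -1;
     1, -1, -1, 0, -1, -1, 1;
     -1, 0, 0, 1, 0, 0, 0;
     -1, 0, 0, 1, 0, 0, 0;
     0, 1, 1, -1, 0, 0, 0]

lemma stepL3 {F : Type*} [Field F] (x : Fin 7 → F) :
    mutate ((![x 0, (((x 0)) + ((x 3))) / (x 1), x 2, x 3, x 4, (((x 6)) + ((x 3))) / (x 5), x 6] : Fin 7 → F), BL2) 3 =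
    (![x 0, (((x 0)) + ((x 3))) / (x 1), x 2, (((x 0) * (x 6)) + (((((x 0)) + ((x 3))) / (x 1)) * (x 2) * (x 4) * ((((x 6)) + ((x 3))) / (x 5)))) / (x 3), x 4, (((x 6)) + ((x 3))) / (x 5), x 6], BL3) := by
  refine Prod.ext ?_ (show mutateB BL2 3 = BL3 by decide)
  funext i
  fin_cases i <;>
    (simp [mutate, mutateX, Fin.prod_univ_seven, BL2, Matrix.of_apply, -Matrix.vecCons_const]; try ring)

def BL4 : Matrix (Fin 7) (Fin 7) ℤ :=
  !![0, 0, 0, 0, 1, -1, 0;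
     0, 0, 0, 1, 0, 0, -1;
     0, 0, 0, 1, 0, 0, -1;
     0, -1, -1, 0, -1, 1, 1;
     -1, 0, 0, 1, 0, 0, 0;
     1, 0, 0, -1, 0, 0, 0;
     0, 1, 1, -1, 0, 0, 0]

lemma stepL4 {F : Type*} [Field F] (x : Fin 7 → F) :
    mutate ((![x 0, (((x 0)) + ((x 3))) / (x 1), x 2, (((x 0) * (x 6)) + (((((x 0)) + ((x 3))) / (x 1)) * (x 2) * (x 4) * ((((x 6)) + ((x 3))) / (x 5)))) / (x 3), x 4, (((x 6)) + ((x 3))) / (x 5), x 6] : Fin 7 → F), BL3) 5 =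
    (![x 0, (((x 0)) + ((x 3))) / (x 1), x 2, (((x 0) * (x 6)) + (((((x 0)) + ((x 3))) / (x 1)) * (x 2) * (x 4) * ((((x 6)) + ((x 3))) / (x 5)))) / (x 3), x 4, (((x 0)) + (((((x 0) * (x 6)) + (((((x 0)) + ((x 3))) / (x 1)) * (x 2) * (x 4) * ((((x 6)) + ((x 3))) / (x 5)))) / (x 3)))) / ((((x 6)) + ((x 3))) / (x 5)), x 6], BL4) := by
  refine Prod.ext ?_ (show mutateB BL3 5 = BL4 by decide)
  funext i
  fin_cases i <;>
    (simp [mutate, mutateX, Fin.prod_univ_seven, BL3, Matrix.of_apply, -Matrix.vecCons_const]; try ring)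

def BL5 : Matrix (Fin 7) (Fin 7) ℤ :=
  !![0, 0, 0, 0, 1, -1, 0;
     0, 0, 0, -1, 0, 0, 1;
     0, 0, 0, 1, 0, 0, -1;
     0, 1, -1, 0, -1, 1, 0;
     -1, 0, 0, 1, 0, 0, 0;
     1, 0, 0, -1, 0, 0, 0;
     0, -1, 1, 0, 0, 0, 0]

lemma stepL5 {F : Type*} [Field F] (x : Fin 7 → F) :
    mutate ((![x 0, (((x 0)) + ((x 3))) / (x 1), x 2, (((x 0) * (x 6)) + (((((x 0)) + ((x 3))) / (x 1)) * (x 2) * (x 4) * ((((x 6)) + ((x 3))) / (x 5)))) / (x 3), x 4, (((x 0)) + (((((x 0) * (x 6)) + (((((x 0)) + ((x 3))) / (x 1)) * (x 2) * (x 4) * ((((x 6)) + ((x 3))) / (x 5)))) / (x 3)))) / ((((x 6)) + ((x 3))) / (x 5)), x 6] : Fin 7 → F), BL4) 1 =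
    (![x 0, (((x 6)) + (((((x 0) * (x 6)) + (((((x 0)) + ((x 3))) / (x 1)) * (x 2) * (x 4) * ((((x 6)) + ((x 3))) / (x 5)))) / (x 3)))) / ((((x 0)) + ((x 3))) / (x 1)), x 2, (((x 0) * (x 6)) + (((((x 0)) + ((x 3))) / (x 1)) * (x 2) * (x 4) * ((((x 6)) + ((x 3))) / (x 5)))) / (x 3), x 4, (((x 0)) + (((((x 0) * (x 6)) + (((((x 0)) + ((x 3))) / (x 1)) * (x 2) * (x 4) * ((((x 6)) + ((x 3))) / (x 5)))) / (x 3)))) / ((((x 6)) + ((x 3))) / (x 5)), x 6], BL5) := by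
  refine Prod.ext ?_ (show mutateB BL4 1 = BL5 by decide)
  funext i
  fin_cases i <;>
    (simp [mutate, mutateX, Fin.prod_univ_seven, BL4, Matrix.of_apply, -Matrix.vecCons_const]; try ring)

def BR1 : Matrix (Fin 7) (Fin 7) ℤ :=
  !![0, 1, -1, 0, 0, 0, 0;
     -1, 0, 1, -1, 1, 0, 0;
     1, -1, 0, 1, 0, -1, 0;
     0, 1, -1, 0, -1, 1, 0;
     0, -1, 0, 1, 0, -1, 1;
     0, 0, 1, -1, 1, 0, -1;
     0, 0, 0, 0, -1, 1, 0]

lemma stepR1 {F : Type*} [Field F] (x : Fin 7 → F) :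
    mutate ((x : Fin 7 → F), B7) 3 =
    (![x 0, x 1, x 2, (((x 1) * (x 5)) + ((x 2) * (x 4))) / (x 3), x 4, x 5, x 6], BR1) := by
  refine Prod.ext ?_ (show mutateB B7 3 = BR1 by decide)
  funext i
  fin_cases i <;>
    (simp [mutate, mutateX, Fin.prod_univ_seven, B7, Matrix.of_apply, -Matrix.vecCons_const]; try ring)

def BR2 : Matrix (Fin 7) (Fin 7) ℤ :=
  !![0, 1, -1, 0, 0, 0, 0;
     -1, 0, 1, -1, 1, 0, 0;
     1, -1, 0, 0, 0, 1, -1;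
     0, 1, 0, 0, 0, -1, 0;
     0, -1, 0, 0, 0, 1, 0;
     0, 0, -1, 1, -1, 0, 1;
     0, 0, 1, 0, 0, -1, 0]

lemma stepR2 {F : Type*} [Field F] (x : Fin 7 → F) :
    mutate ((![x 0, x 1, x 2, (((x 1) * (x 5)) + ((x 2) * (x 4))) / (x 3), x 4, x 5, x 6] : Fin 7 → F), BR1) 5 =
    (![x 0, x 1, x 2, (((x 1) * (x 5)) + ((x 2) * (x 4))) / (x 3), x 4, ((((((x 1) * (x 5)) + ((x 2) * (x 4))) / (x 3)) * (x 6)) + ((x 2) * (x 4))) / (x 5), x 6], BR2) := by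
  refine Prod.ext ?_ (show mutateB BR1 5 = BR2 by decide)
  funext i
  fin_cases i <;>
    (simp [mutate, mutateX, Fin.prod_univ_seven, BR1, Matrix.of_apply, -Matrix.vecCons_const]; try ring)

def BR3 : Matrix (Fin 7) (Fin 7) ℤ :=
  !![0, -1, 0, 0, 1, 0, 0;
     1, 0, -1, 1, -1, 0, 0;
     0, 1, 0, -1, 0, 1, -1;
     0, -1, 1, 0, 1, -1, 0;
     -1, 1, 0, -1, 0, 1, 0;
     0, 0, -1, 1, -1, 0, 1;
     0, 0, 1, 0, 0, -1, 0]

lemma stepR3 {F : Type*} [Field F] (x : Fin 7 → F) :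
    mutate ((![x 0, x 1, x 2, (((x 1) * (x 5)) + ((x 2) * (x 4))) / (x 3), x 4, ((((((x 1) * (x 5)) + ((x 2) * (x 4))) / (x 3)) * (x 6)) + ((x 2) * (x 4))) / (x 5), x 6] : Fin 7 → F), BR2) 1 =
    (![x 0, (((x 0) * ((((x 1) * (x 5)) + ((x 2) * (x 4))) / (x 3))) + ((x 2) * (x 4))) / (x 1), x 2, (((x 1) * (x 5)) + ((x 2) * (x 4))) / (x 3), x 4, ((((((x 1) * (x 5)) + ((x 2) * (x 4))) / (x 3)) * (x 6)) + ((x 2) * (x 4))) / (x 5), x 6], BR3) := by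
  refine Prod.ext ?_ (show mutateB BR2 1 = BR3 by decide)
  funext i
  fin_cases i <;>
    (simp [mutate, mutateX, Fin.prod_univ_seven, BR2, Matrix.of_apply, -Matrix.vecCons_const]; try ring)

def BR4 : Matrix (Fin 7) (Fin 7) ℤ :=
  !![0, -1, 0, 0, 1, 0, 0;
     1, 0, 0, -1, 0, 0, 0;
     0, 0, 0, 1, 0, 0, -1;
     0, 1, -1, 0, -1, 1, 0;
     -1, 0, 0, 1, 0, 0, 0;
     0, 0, 0, -1, 0, 0, 1;
     0, 0, 1, 0, 0, -1, 0]

lemma stepR4 {F : Type*} [Field F] (x : Fin 7 → F) :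
    mutate ((![x 0, (((x 0) * ((((x 1) * (x 5)) + ((x 2) * (x 4))) / (x 3))) + ((x 2) * (x 4))) / (x 1), x 2, (((x 1) * (x 5)) + ((x 2) * (x 4))) / (x 3), x 4, ((((((x 1) * (x 5)) + ((x 2) * (x 4))) / (x 3)) * (x 6)) + ((x 2) * (x 4))) / (x 5), x 6] : Fin 7 → F), BR3) 3 =
    (![x 0, (((x 0) * ((((x 1) * (x 5)) + ((x 2) * (x 4))) / (x 3))) + ((x 2) * (x 4))) / (x 1), x 2, ((((((x 0) * ((((x 1) * (x 5)) + ((x 2) * (x 4))) / (x 3))) + ((x 2) * (x 4))) / (x 1)) * (((((((x 1) * (x 5)) + ((x 2) * (x 4))) / (x 3)) * (x 6)) + ((x 2) * (x 4))) / (x 5))) + ((x 2) * (x 4))) / ((((x 1) * (x 5)) + ((x 2) * (x 4))) / (x 3)), x 4, ((((((x 1) * (x 5)) + ((x 2) * (x 4))) / (x 3)) * (x 6)) + ((x 2) * (x 4))) / (x 5), x 6], BR4) := by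
  refine Prod.ext ?_ (show mutateB BR3 3 = BR4 by decide)
  funext i
  fin_cases i <;>
    (simp [mutate, mutateX, Fin.prod_univ_seven, BR3, Matrix.of_apply, -Matrix.vecCons_const]; try ring)



set_option maxHeartbeats 2000000 in
/-- the alternative expression `R = s_{2,5} ∘ s_{3,6} ∘ μ_2 ∘ μ_6 ∘ μ_4 ∘ μ_2 ∘ μ_6`
(applied right to left; indices here are 0-based, so `μ_2` is `mutate · 1`, `μ_6` is
`mutate · 5`, `μ_4` is `mutate · 3`, `s_{3,6}` is `swapSeed 2 5`, `s_{2,5}` is `swapSeed 1 4`). -/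
theorem R_alternative_expression {F : Type*} [Field F]
    (x : Fin 7 → F) (hx : AlgebraicIndependent ℤ x) :
    swapSeed 1 4 (swapSeed 2 5
        (mutate (mutate (mutate (mutate (mutate (x, B7) 5) 1) 3) 5) 1))
      = Rop7 (x, B7) := by
  unfold Rop7
  rw [stepL1, stepL2, stepL3, stepL4, stepL5, stepR1, stepR2, stepR3, stepR4]
  have h1 : x 1 ≠ 0 := by
    have := indep_ne hx (MvPolynomial.X 1) (by simp); simpa using this
  have h3 : x 3 ≠ 0 := by
    have := indep_ne hx (MvPolynomial.X 3) (by simp); simpa using this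
  have h5 : x 5 ≠ 0 := by
    have := indep_ne hx (MvPolynomial.X 5) (by simp); simpa using this
  have h63 : x 6 + x 3 ≠ 0 := by
    have := indep_ne hx (MvPolynomial.X 6 + MvPolynomial.X 3) (by simp); simpa using this
  have h03 : x 0 + x 3 ≠ 0 := by
    have := indep_ne hx (MvPolynomial.X 0 + MvPolynomial.X 3) (by simp); simpa using this
  have h1524 : x 1 * x 5 + x 2 * x 4 ≠ 0 := by
    have := indep_ne hx (MvPolynomial.X 1 * MvPolynomial.X 5 + MvPolynomial.X 2 * MvPolynomial.X 4)
      (by simp); simpa using this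
  refine Prod.ext ?_ (by simp only [swapSeed]; decide)
  funext i
  fin_cases i <;>
    simp [swapSeed, Equiv.swap_apply_def] <;>
    (try field_simp) <;>
    ring
end

section
/- On seeds (x, B) with x = (x_1, ..., x_7) and B the 7×7 exchange matrix with rows (0,1,-1,0,0,0,0), (-1,0,0,1,0,0,0), (1,0,0,-1,0,0,0), (0,-1,1,0,1,-1,0), (0,0,0,-1,0,0,1), (0,0,0,1,0,0,-1), (0,0,0,0,-1,1,0), the periodicity identity s_{3,5} ∘ (μ_3 ∘ μ_5 ∘ μ_4)^3 = id holds: applying μ_4, μ_5, μ_3 in that order three times and then transposing indices 3 and 5 returns the original seed (x, B). -/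
open Finset

variable {F : Type*} [Field F] {N : ℕ}

set_option maxHeartbeats 1000000
@[simp] private lemma cons_val_five {α : Type*} {m : ℕ} (x : α) (u : Fin (m+5) → α) :
    Matrix.vecCons x u 5 = Matrix.vecHead (Matrix.vecTail (Matrix.vecTail (Matrix.vecTail (Matrix.vecTail u)))) := rfl

@[simp] private lemma cons_val_six {α : Type*} {m : ℕ} (x : α) (u : Fin (m+6) → α) :
    Matrix.vecCons x u 6 = Matrix.vecHead (Matrix.vecTail (Matrix.vecTail (Matrix.vecTail (Matrix.vecTail (Matrix.vecTail u))))) := rfl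

def M1 : Matrix (Fin 7) (Fin 7) ℤ :=
  !![0, 1, -1, 0, 0, 0, 0;
     -1, 0, 1, -1, 1, 0, 0;
     1, -1, 0, 1, 0, -1, 0;
     0, 1, -1, 0, -1, 1, 0;
     0, -1, 0, 1, 0, -1, 1;
     0, 0, 1, -1, 1, 0, -1;
     0, 0, 0, 0, -1, 1, 0]
def M2 : Matrix (Fin 7) (Fin 7) ℤ :=
  !![0, 1, -1, 0, 0, 0, 0;
     -1, 0, 1, 0, -1, 0, 1;
     1, -1, 0, 1, 0, -1, 0;
     0, 0, -1, 0, 1, 0, 0;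
     0, 1, 0, -1, 0, 1, -1;
     0, 0, 1, 0, -1, 0, 0;
     0, -1, 0, 0, 1, 0, 0]
def M3 : Matrix (Fin 7) (Fin 7) ℤ :=
  !![0, 0, 1, 0, 0, -1, 0;
     0, 0, -1, 1, -1, 0, 1;
     -1, 1, 0, -1, 0, 1, 0;
     0, -1, 1, 0, 1, -1, 0;
     0, 1, 0, -1, 0, 1, -1;
     1, 0, -1, 1, -1, 0, 0;
     0, -1, 0, 0, 1, 0, 0]
def M4 : Matrix (Fin 7) (Fin 7) ℤ :=
  !![0, 0, 1, 0, 0, -1, 0;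
     0, 0, 0, -1, 0, 0, 1;
     -1, 0, 0, 1, 0, 0, 0;
     0, 1, -1, 0, -1, 1, 0;
     0, 0, 0, 1, 0, 0, -1;
     1, 0, 0, -1, 0, 0, 0;
     0, -1, 0, 0, 1, 0, 0]
def M5 : Matrix (Fin 7) (Fin 7) ℤ :=
  !![0, 0, 1, 0, 0, -1, 0;
     0, 0, 0, -1, 0, 0, 1;
     -1, 0, 0, 1, 0, 0, 0;
     0, 1, -1, 0, 1, 1, -1;
     0, 0, 0, -1, 0, 0, 1;
     1, 0, 0, -1, 0, 0, 0;
     0, -1, 0, 1, -1, 0, 0]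
def M6 : Matrix (Fin 7) (Fin 7) ℤ :=
  !![0, 0, -1, 1, 0, -1, 0;
     0, 0, 0, -1, 0, 0, 1;
     1, 0, 0, -1, 0, 0, 0;
     -1, 1, 1, 0, 1, 1, -1;
     0, 0, 0, -1, 0, 0, 1;
     1, 0, 0, -1, 0, 0, 0;
     0, -1, 0, 1, -1, 0, 0]
def M7 : Matrix (Fin 7) (Fin 7) ℤ :=
  !![0, 1, 0, -1, 1, 0, 0;
     -1, 0, 0, 1, 0, 0, 0;
     0, 0, 0, 1, 0, 0, -1;
     1, -1, -1, 0, -1, -1, 1;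
     -1, 0, 0, 1, 0, 0, 0;
     0, 0, 0, 1, 0, 0, -1;
     0, 0, 1, -1, 0, 1, 0]
def M8 : Matrix (Fin 7) (Fin 7) ℤ :=
  !![0, 1, 0, 0, -1, 0, 0;
     -1, 0, 0, 1, 0, 0, 0;
     0, 0, 0, 1, 0, 0, -1;
     0, -1, -1, 0, 1, -1, 1;
     1, 0, 0, -1, 0, 0, 0;
     0, 0, 0, 1, 0, 0, -1;
     0, 0, 1, -1, 0, 1, 0]
def M9 : Matrix (Fin 7) (Fin 7) ℤ :=
  !![0, 1, 0, 0, -1, 0, 0;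
     -1, 0, 0, 1, 0, 0, 0;
     0, 0, 0, -1, 0, 0, 1;
     0, -1, 1, 0, 1, -1, 0;
     1, 0, 0, -1, 0, 0, 0;
     0, 0, 0, 1, 0, 0, -1;
     0, 0, -1, 0, 0, 1, 0]

private lemma aeval_ne_zero_of_eval_one {F : Type*} [Field F] {x : Fin 7 → F}
    (hx : AlgebraicIndependent ℤ x) (P : MvPolynomial (Fin 7) ℤ)
    (h : MvPolynomial.eval (fun _ => (1 : ℤ)) P ≠ 0) :
    MvPolynomial.aeval x P ≠ 0 := fun h0 => by
  rw [hx.eq_zero_of_aeval_eq_zero P h0] at h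
  simp at h

/-- the periodicity `s_{3,5} ∘ (μ_3 ∘ μ_5 ∘ μ_4)³ = id`: applying
`μ_4, μ_5, μ_3` in that order three times and then transposing indices 3 and 5
(0-based: mutations at `3, 4, 2` and the swap `swapSeed 2 4`) returns the seed. -/
theorem periodicity_354 {F : Type*} [Field F]
    (x : Fin 7 → F) (hx : AlgebraicIndependent ℤ x) :
    swapSeed 2 4
      (mutate (mutate (mutate
        (mutate (mutate (mutate
          (mutate (mutate (mutate (x, B7) 3) 4) 2) 3) 4) 2) 3) 4) 2)
      = (x, B7) := by
  have h0 : x 0 ≠ 0 := by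
    have := aeval_ne_zero_of_eval_one hx (MvPolynomial.X 0) (by norm_num)
    simpa using this
  have h1 : x 1 ≠ 0 := by
    have := aeval_ne_zero_of_eval_one hx (MvPolynomial.X 1) (by norm_num)
    simpa using this
  have h2s : x 2 ≠ 0 := by
    have := aeval_ne_zero_of_eval_one hx (MvPolynomial.X 2) (by norm_num)
    simpa using this
  have h3 : x 3 ≠ 0 := by
    have := aeval_ne_zero_of_eval_one hx (MvPolynomial.X 3) (by norm_num)
    simpa using this
  have h4 : x 4 ≠ 0 := by
    have := aeval_ne_zero_of_eval_one hx (MvPolynomial.X 4) (by norm_num)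
    simpa using this
  have h5 : x 5 ≠ 0 := by
    have := aeval_ne_zero_of_eval_one hx (MvPolynomial.X 5) (by norm_num)
    simpa using this
  have h6 : x 6 ≠ 0 := by
    have := aeval_ne_zero_of_eval_one hx (MvPolynomial.X 6) (by norm_num)
    simpa using this
  have hA : x 1 * x 5 + x 2 * x 4 ≠ 0 := by
    have := aeval_ne_zero_of_eval_one hx (MvPolynomial.X 1 * MvPolynomial.X 5 + MvPolynomial.X 2 * MvPolynomial.X 4) (by norm_num)
    simpa using this
  have hBn : x 1 * x 3 * x 5 + x 2 * x 4 * x 6 + x 1 * x 5 * x 6 ≠ 0 := by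
    have := aeval_ne_zero_of_eval_one hx (MvPolynomial.X 1 * MvPolynomial.X 3 * MvPolynomial.X 5 + MvPolynomial.X 2 * MvPolynomial.X 4 * MvPolynomial.X 6 + MvPolynomial.X 1 * MvPolynomial.X 5 * MvPolynomial.X 6) (by norm_num)
    simpa using this
  have hC : x 1 * x 3 * x 5 + x 0 * x 2 * x 4 + x 0 * x 1 * x 5 ≠ 0 := by
    have := aeval_ne_zero_of_eval_one hx (MvPolynomial.X 1 * MvPolynomial.X 3 * MvPolynomial.X 5 + MvPolynomial.X 0 * MvPolynomial.X 2 * MvPolynomial.X 4 + MvPolynomial.X 0 * MvPolynomial.X 1 * MvPolynomial.X 5) (by norm_num)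
    simpa using this
  have hD : x 1 * x 3 * x 5 * x 6 + x 1 * x 3 ^ 2 * x 5 + x 0 * x 2 * x 4 * x 6 + x 0 * x 1 * x 5 * x 6 + x 0 * x 1 * x 3 * x 5 ≠ 0 := by
    have := aeval_ne_zero_of_eval_one hx (MvPolynomial.X 1 * MvPolynomial.X 3 * MvPolynomial.X 5 * MvPolynomial.X 6 + MvPolynomial.X 1 * MvPolynomial.X 3 ^ 2 * MvPolynomial.X 5 + MvPolynomial.X 0 * MvPolynomial.X 2 * MvPolynomial.X 4 * MvPolynomial.X 6 + MvPolynomial.X 0 * MvPolynomial.X 1 * MvPolynomial.X 5 * MvPolynomial.X 6 + MvPolynomial.X 0 * MvPolynomial.X 1 * MvPolynomial.X 3 * MvPolynomial.X 5) (by norm_num)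
    simpa using this
  have hE : x 3 + x 0 ≠ 0 := by
    have := aeval_ne_zero_of_eval_one hx (MvPolynomial.X 3 + MvPolynomial.X 0) (by norm_num)
    simpa using this
  have hF : x 6 + x 3 ≠ 0 := by
    have := aeval_ne_zero_of_eval_one hx (MvPolynomial.X 6 + MvPolynomial.X 3) (by norm_num)
    simpa using this
  have e1 : mutate ((x, B7) : Seed F 7) 3 = (![x 0, x 1, x 2, ((x 1 * x 5 + x 2 * x 4) / x 3), x 4, x 5, x 6], M1) := by
    have hB : mutateB B7 3 = M1 := by decide
    have hX : mutateX ((x, B7) : Seed F 7) 3 = ![x 0, x 1, x 2, ((x 1 * x 5 + x 2 * x 4) / x 3), x 4, x 5, x 6] := by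
      funext i
      fin_cases i <;> simp [mutateX, B7, B7, Fin.prod_univ_seven, Matrix.vecHead, Matrix.vecTail] <;>
        field_simp <;> ring
    exact Prod.ext hX hB
  have e2 : mutate ((![x 0, x 1, x 2, ((x 1 * x 5 + x 2 * x 4) / x 3), x 4, x 5, x 6], M1) : Seed F 7) 4 = (![x 0, x 1, x 2, ((x 1 * x 5 + x 2 * x 4) / x 3), ((x 1 * x 3 * x 5 + x 2 * x 4 * x 6 + x 1 * x 5 * x 6) / (x 3 * x 4)), x 5, x 6], M2) := by
    have hB : mutateB M1 4 = M2 := by decide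
    have hX : mutateX ((![x 0, x 1, x 2, ((x 1 * x 5 + x 2 * x 4) / x 3), x 4, x 5, x 6], M1) : Seed F 7) 4 = ![x 0, x 1, x 2, ((x 1 * x 5 + x 2 * x 4) / x 3), ((x 1 * x 3 * x 5 + x 2 * x 4 * x 6 + x 1 * x 5 * x 6) / (x 3 * x 4)), x 5, x 6] := by
      funext i
      fin_cases i <;> simp [mutateX, B7, M1, Fin.prod_univ_seven, Matrix.vecHead, Matrix.vecTail] <;>
        field_simp <;> ring
    exact Prod.ext hX hB
  have e3 : mutate ((![x 0, x 1, x 2, ((x 1 * x 5 + x 2 * x 4) / x 3), ((x 1 * x 3 * x 5 + x 2 * x 4 * x 6 + x 1 * x 5 * x 6) / (x 3 * x 4)), x 5, x 6], M2) : Seed F 7) 2 = (![x 0, x 1, ((x 1 * x 3 * x 5 + x 0 * x 2 * x 4 + x 0 * x 1 * x 5) / (x 2 * x 3)), ((x 1 * x 5 + x 2 * x 4) / x 3), ((x 1 * x 3 * x 5 + x 2 * x 4 * x 6 + x 1 * x 5 * x 6) / (x 3 * x 4)), x 5, x 6], M3) := by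
    have hB : mutateB M2 2 = M3 := by decide
    have hX : mutateX ((![x 0, x 1, x 2, ((x 1 * x 5 + x 2 * x 4) / x 3), ((x 1 * x 3 * x 5 + x 2 * x 4 * x 6 + x 1 * x 5 * x 6) / (x 3 * x 4)), x 5, x 6], M2) : Seed F 7) 2 = ![x 0, x 1, ((x 1 * x 3 * x 5 + x 0 * x 2 * x 4 + x 0 * x 1 * x 5) / (x 2 * x 3)), ((x 1 * x 5 + x 2 * x 4) / x 3), ((x 1 * x 3 * x 5 + x 2 * x 4 * x 6 + x 1 * x 5 * x 6) / (x 3 * x 4)), x 5, x 6] := by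
      funext i
      fin_cases i <;> simp [mutateX, B7, M2, Fin.prod_univ_seven, Matrix.vecHead, Matrix.vecTail] <;>
        field_simp <;> ring
    exact Prod.ext hX hB
  have e4 : mutate ((![x 0, x 1, ((x 1 * x 3 * x 5 + x 0 * x 2 * x 4 + x 0 * x 1 * x 5) / (x 2 * x 3)), ((x 1 * x 5 + x 2 * x 4) / x 3), ((x 1 * x 3 * x 5 + x 2 * x 4 * x 6 + x 1 * x 5 * x 6) / (x 3 * x 4)), x 5, x 6], M3) : Seed F 7) 3 = (![x 0, x 1, ((x 1 * x 3 * x 5 + x 0 * x 2 * x 4 + x 0 * x 1 * x 5) / (x 2 * x 3)), ((x 1 * x 3 * x 5 * x 6 + x 1 * x 3 ^ 2 * x 5 + x 0 * x 2 * x 4 * x 6 + x 0 * x 1 * x 5 * x 6 + x 0 * x 1 * x 3 * x 5) / (x 2 * x 3 * x 4)), ((x 1 * x 3 * x 5 + x 2 * x 4 * x 6 + x 1 * x 5 * x 6) / (x 3 * x 4)), x 5, x 6], M4) := by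
    have hB : mutateB M3 3 = M4 := by decide
    have hX : mutateX ((![x 0, x 1, ((x 1 * x 3 * x 5 + x 0 * x 2 * x 4 + x 0 * x 1 * x 5) / (x 2 * x 3)), ((x 1 * x 5 + x 2 * x 4) / x 3), ((x 1 * x 3 * x 5 + x 2 * x 4 * x 6 + x 1 * x 5 * x 6) / (x 3 * x 4)), x 5, x 6], M3) : Seed F 7) 3 = ![x 0, x 1, ((x 1 * x 3 * x 5 + x 0 * x 2 * x 4 + x 0 * x 1 * x 5) / (x 2 * x 3)), ((x 1 * x 3 * x 5 * x 6 + x 1 * x 3 ^ 2 * x 5 + x 0 * x 2 * x 4 * x 6 + x 0 * x 1 * x 5 * x 6 + x 0 * x 1 * x 3 * x 5) / (x 2 * x 3 * x 4)), ((x 1 * x 3 * x 5 + x 2 * x 4 * x 6 + x 1 * x 5 * x 6) / (x 3 * x 4)), x 5, x 6] := by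
      funext i
      fin_cases i <;> simp [mutateX, B7, M3, Fin.prod_univ_seven, Matrix.vecHead, Matrix.vecTail] <;>
        field_simp <;> ring
    exact Prod.ext hX hB
  have e5 : mutate ((![x 0, x 1, ((x 1 * x 3 * x 5 + x 0 * x 2 * x 4 + x 0 * x 1 * x 5) / (x 2 * x 3)), ((x 1 * x 3 * x 5 * x 6 + x 1 * x 3 ^ 2 * x 5 + x 0 * x 2 * x 4 * x 6 + x 0 * x 1 * x 5 * x 6 + x 0 * x 1 * x 3 * x 5) / (x 2 * x 3 * x 4)), ((x 1 * x 3 * x 5 + x 2 * x 4 * x 6 + x 1 * x 5 * x 6) / (x 3 * x 4)), x 5, x 6], M4) : Seed F 7) 4 = (![x 0, x 1, ((x 1 * x 3 * x 5 + x 0 * x 2 * x 4 + x 0 * x 1 * x 5) / (x 2 * x 3)), ((x 1 * x 3 * x 5 * x 6 + x 1 * x 3 ^ 2 * x 5 + x 0 * x 2 * x 4 * x 6 + x 0 * x 1 * x 5 * x 6 + x 0 * x 1 * x 3 * x 5) / (x 2 * x 3 * x 4)), ((x 3 + x 0) / x 2), x 5, x 6], M5) := by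
    have hB : mutateB M4 4 = M5 := by decide
    have hX : mutateX ((![x 0, x 1, ((x 1 * x 3 * x 5 + x 0 * x 2 * x 4 + x 0 * x 1 * x 5) / (x 2 * x 3)), ((x 1 * x 3 * x 5 * x 6 + x 1 * x 3 ^ 2 * x 5 + x 0 * x 2 * x 4 * x 6 + x 0 * x 1 * x 5 * x 6 + x 0 * x 1 * x 3 * x 5) / (x 2 * x 3 * x 4)), ((x 1 * x 3 * x 5 + x 2 * x 4 * x 6 + x 1 * x 5 * x 6) / (x 3 * x 4)), x 5, x 6], M4) : Seed F 7) 4 = ![x 0, x 1, ((x 1 * x 3 * x 5 + x 0 * x 2 * x 4 + x 0 * x 1 * x 5) / (x 2 * x 3)), ((x 1 * x 3 * x 5 * x 6 + x 1 * x 3 ^ 2 * x 5 + x 0 * x 2 * x 4 * x 6 + x 0 * x 1 * x 5 * x 6 + x 0 * x 1 * x 3 * x 5) / (x 2 * x 3 * x 4)), ((x 3 + x 0) / x 2), x 5, x 6] := by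
      funext i
      have hBn' : x 1 * x 3 * x 5 + x 6 * x 2 * x 4 + x 6 * x 1 * x 5 ≠ 0 := by
        convert hBn using 1; ring
      fin_cases i <;> simp [mutateX, B7, M4, Fin.prod_univ_seven, Matrix.vecHead, Matrix.vecTail] <;>
        field_simp <;> ring
    exact Prod.ext hX hB
  have e6 : mutate ((![x 0, x 1, ((x 1 * x 3 * x 5 + x 0 * x 2 * x 4 + x 0 * x 1 * x 5) / (x 2 * x 3)), ((x 1 * x 3 * x 5 * x 6 + x 1 * x 3 ^ 2 * x 5 + x 0 * x 2 * x 4 * x 6 + x 0 * x 1 * x 5 * x 6 + x 0 * x 1 * x 3 * x 5) / (x 2 * x 3 * x 4)), ((x 3 + x 0) / x 2), x 5, x 6], M5) : Seed F 7) 2 = (![x 0, x 1, ((x 6 + x 3) / x 4), ((x 1 * x 3 * x 5 * x 6 + x 1 * x 3 ^ 2 * x 5 + x 0 * x 2 * x 4 * x 6 + x 0 * x 1 * x 5 * x 6 + x 0 * x 1 * x 3 * x 5) / (x 2 * x 3 * x 4)), ((x 3 + x 0) / x 2), x 5, x 6], M6) := by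
    have hB : mutateB M5 2 = M6 := by decide
    have hX : mutateX ((![x 0, x 1, ((x 1 * x 3 * x 5 + x 0 * x 2 * x 4 + x 0 * x 1 * x 5) / (x 2 * x 3)), ((x 1 * x 3 * x 5 * x 6 + x 1 * x 3 ^ 2 * x 5 + x 0 * x 2 * x 4 * x 6 + x 0 * x 1 * x 5 * x 6 + x 0 * x 1 * x 3 * x 5) / (x 2 * x 3 * x 4)), ((x 3 + x 0) / x 2), x 5, x 6], M5) : Seed F 7) 2 = ![x 0, x 1, ((x 6 + x 3) / x 4), ((x 1 * x 3 * x 5 * x 6 + x 1 * x 3 ^ 2 * x 5 + x 0 * x 2 * x 4 * x 6 + x 0 * x 1 * x 5 * x 6 + x 0 * x 1 * x 3 * x 5) / (x 2 * x 3 * x 4)), ((x 3 + x 0) / x 2), x 5, x 6] := by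
      funext i
      fin_cases i <;> simp [mutateX, B7, M5, Fin.prod_univ_seven, Matrix.vecHead, Matrix.vecTail] <;>
        field_simp <;> ring
    exact Prod.ext hX hB
  have e7 : mutate ((![x 0, x 1, ((x 6 + x 3) / x 4), ((x 1 * x 3 * x 5 * x 6 + x 1 * x 3 ^ 2 * x 5 + x 0 * x 2 * x 4 * x 6 + x 0 * x 1 * x 5 * x 6 + x 0 * x 1 * x 3 * x 5) / (x 2 * x 3 * x 4)), ((x 3 + x 0) / x 2), x 5, x 6], M6) : Seed F 7) 3 = (![x 0, x 1, ((x 6 + x 3) / x 4), x 3, ((x 3 + x 0) / x 2), x 5, x 6], M7) := by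
    have hB : mutateB M6 3 = M7 := by decide
    have hX : mutateX ((![x 0, x 1, ((x 6 + x 3) / x 4), ((x 1 * x 3 * x 5 * x 6 + x 1 * x 3 ^ 2 * x 5 + x 0 * x 2 * x 4 * x 6 + x 0 * x 1 * x 5 * x 6 + x 0 * x 1 * x 3 * x 5) / (x 2 * x 3 * x 4)), ((x 3 + x 0) / x 2), x 5, x 6], M6) : Seed F 7) 3 = ![x 0, x 1, ((x 6 + x 3) / x 4), x 3, ((x 3 + x 0) / x 2), x 5, x 6] := by
      funext i
      have hD' : x 1 * x 3 * (x 6 + x 3) * x 5 + x 0 * x 6 * x 4 * x 2 + x 0 * x 6 * x 1 * x 5 + x 0 * x 1 * x 3 * x 5 ≠ 0 := by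
        convert hD using 1; ring
      fin_cases i <;> simp [mutateX, B7, M6, Fin.prod_univ_seven, Matrix.vecHead, Matrix.vecTail] <;>
        field_simp <;> ring
    exact Prod.ext hX hB
  have e8 : mutate ((![x 0, x 1, ((x 6 + x 3) / x 4), x 3, ((x 3 + x 0) / x 2), x 5, x 6], M7) : Seed F 7) 4 = (![x 0, x 1, ((x 6 + x 3) / x 4), x 3, x 2, x 5, x 6], M8) := by
    have hB : mutateB M7 4 = M8 := by decide
    have hX : mutateX ((![x 0, x 1, ((x 6 + x 3) / x 4), x 3, ((x 3 + x 0) / x 2), x 5, x 6], M7) : Seed F 7) 4 = ![x 0, x 1, ((x 6 + x 3) / x 4), x 3, x 2, x 5, x 6] := by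
      funext i
      fin_cases i <;> simp [mutateX, B7, M7, Fin.prod_univ_seven, Matrix.vecHead, Matrix.vecTail] <;>
        field_simp <;> ring
    exact Prod.ext hX hB
  have e9 : mutate ((![x 0, x 1, ((x 6 + x 3) / x 4), x 3, x 2, x 5, x 6], M8) : Seed F 7) 2 = (![x 0, x 1, x 4, x 3, x 2, x 5, x 6], M9) := by
    have hB : mutateB M8 2 = M9 := by decide
    have hX : mutateX ((![x 0, x 1, ((x 6 + x 3) / x 4), x 3, x 2, x 5, x 6], M8) : Seed F 7) 2 = ![x 0, x 1, x 4, x 3, x 2, x 5, x 6] := by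
      funext i
      fin_cases i <;> simp [mutateX, B7, M8, Fin.prod_univ_seven, Matrix.vecHead, Matrix.vecTail] <;>
        field_simp <;> ring
    exact Prod.ext hX hB
  rw [e1, e2, e3, e4, e5, e6, e7, e8, e9]
  have hB : (Matrix.of fun a b => M9 (Equiv.swap (2:Fin 7) 4 a) (Equiv.swap (2:Fin 7) 4 b)) = B7 := by decide
  have hX : (![x 0, x 1, x 4, x 3, x 2, x 5, x 6] ∘ Equiv.swap (2:Fin 7) 4) = x := by
    funext i
    fin_cases i <;> simp [Equiv.swap_apply_def] <;> rfl
  exact Prod.ext hX hB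
end

section
/- On seeds (x, B) with x = (x_1, ..., x_7) and B the 7×7 exchange matrix with rows (0,1,-1,0,0,0,0), (-1,0,0,1,0,0,0), (1,0,0,-1,0,0,0), (0,-1,1,0,1,-1,0), (0,0,0,-1,0,0,1), (0,0,0,1,0,0,-1), (0,0,0,0,-1,1,0), the periodicity identity s_{2,6} ∘ (μ_2 ∘ μ_6 ∘ μ_4)^3 = id holds: applying μ_4, μ_6, μ_2 in that order three times and then transposing indices 2 and 6 returns the original seed (x, B). -/
open Finset

variable {F : Type*} [Field F] {N : ℕ}

private lemma ne_zero_of_aeval {F : Type*} [CommRing F] {x : Fin 7 → F}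
    (hx : AlgebraicIndependent ℤ x) (p : MvPolynomial (Fin 7) ℤ)
    (hp : MvPolynomial.eval (fun _ => (1:ℤ)) p ≠ 0) :
    MvPolynomial.aeval x p ≠ 0 := by
  intro h
  apply hp
  have hp0 : p = 0 := hx (show MvPolynomial.aeval x p = MvPolynomial.aeval x 0 by rw [map_zero]; exact h)
  simp [hp0]

private def Bm0 : Matrix (Fin 7) (Fin 7) ℤ :=
  !![0, 1, -1, 0, 0, 0, 0;
     -1, 0, 0, 1, 0, 0, 0;
     1, 0, 0, -1, 0, 0, 0;
     0, -1, 1, 0, 1, -1, 0;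
     0, 0, 0, -1, 0, 0, 1;
     0, 0, 0, 1, 0, 0, -1;
     0, 0, 0, 0, -1, 1, 0]

private def Bm1 : Matrix (Fin 7) (Fin 7) ℤ :=
  !![0, 1, -1, 0, 0, 0, 0;
     -1, 0, 1, -1, 1, 0, 0;
     1, -1, 0, 1, 0, -1, 0;
     0, 1, -1, 0, -1, 1, 0;
     0, -1, 0, 1, 0, -1, 1;
     0, 0, 1, -1, 1, 0, -1;
     0, 0, 0, 0, -1, 1, 0]

private def Bm2 : Matrix (Fin 7) (Fin 7) ℤ :=
  !![0, 1, -1, 0, 0, 0, 0;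
     -1, 0, 1, -1, 1, 0, 0;
     1, -1, 0, 0, 0, 1, -1;
     0, 1, 0, 0, 0, -1, 0;
     0, -1, 0, 0, 0, 1, 0;
     0, 0, -1, 1, -1, 0, 1;
     0, 0, 1, 0, 0, -1, 0]

private def Bm3 : Matrix (Fin 7) (Fin 7) ℤ :=
  !![0, -1, 0, 0, 1, 0, 0;
     1, 0, -1, 1, -1, 0, 0;
     0, 1, 0, -1, 0, 1, -1;
     0, -1, 1, 0, 1, -1, 0;
     -1, 1, 0, -1, 0, 1, 0;
     0, 0, -1, 1, -1, 0, 1;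
     0, 0, 1, 0, 0, -1, 0]

private def Bm4 : Matrix (Fin 7) (Fin 7) ℤ :=
  !![0, -1, 0, 0, 1, 0, 0;
     1, 0, 0, -1, 0, 0, 0;
     0, 0, 0, 1, 0, 0, -1;
     0, 1, -1, 0, -1, 1, 0;
     -1, 0, 0, 1, 0, 0, 0;
     0, 0, 0, -1, 0, 0, 1;
     0, 0, 1, 0, 0, -1, 0]

private def Bm5 : Matrix (Fin 7) (Fin 7) ℤ :=
  !![0, -1, 0, 0, 1, 0, 0;
     1, 0, 0, -1, 0, 0, 0;
     0, 0, 0, 1, 0, 0, -1;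
     0, 1, -1, 0, -1, -1, 1;
     -1, 0, 0, 1, 0, 0, 0;
     0, 0, 0, 1, 0, 0, -1;
     0, 0, 1, -1, 0, 1, 0]

private def Bm6 : Matrix (Fin 7) (Fin 7) ℤ :=
  !![0, 1, 0, -1, 1, 0, 0;
     -1, 0, 0, 1, 0, 0, 0;
     0, 0, 0, 1, 0, 0, -1;
     1, -1, -1, 0, -1, -1, 1;
     -1, 0, 0, 1, 0, 0, 0;
     0, 0, 0, 1, 0, 0, -1;
     0, 0, 1, -1, 0, 1, 0]

private def Bm7 : Matrix (Fin 7) (Fin 7) ℤ :=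
  !![0, 0, -1, 1, 0, -1, 0;
     0, 0, 0, -1, 0, 0, 1;
     1, 0, 0, -1, 0, 0, 0;
     -1, 1, 1, 0, 1, 1, -1;
     0, 0, 0, -1, 0, 0, 1;
     1, 0, 0, -1, 0, 0, 0;
     0, -1, 0, 1, -1, 0, 0]

private def Bm8 : Matrix (Fin 7) (Fin 7) ℤ :=
  !![0, 0, -1, 0, 0, 1, 0;
     0, 0, 0, -1, 0, 0, 1;
     1, 0, 0, -1, 0, 0, 0;
     0, 1, 1, 0, 1, -1, -1;
     0, 0, 0, -1, 0, 0, 1;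
     -1, 0, 0, 1, 0, 0, 0;
     0, -1, 0, 1, -1, 0, 0]

private def Bm9 : Matrix (Fin 7) (Fin 7) ℤ :=
  !![0, 0, -1, 0, 0, 1, 0;
     0, 0, 0, 1, 0, 0, -1;
     1, 0, 0, -1, 0, 0, 0;
     0, -1, 1, 0, 1, -1, 0;
     0, 0, 0, -1, 0, 0, 1;
     -1, 0, 0, 1, 0, 0, 0;
     0, 1, 0, 0, -1, 0, 0]

private lemma step1 {F : Type*} [Field F] (x0 x1 x2 x3 x4 x5 x6 : F)
    (h0 : x0 ≠ 0) (h1 : x1 ≠ 0) (h2 : x2 ≠ 0) (h3 : x3 ≠ 0) (h4 : x4 ≠ 0) (h5 : x5 ≠ 0) (h6 : x6 ≠ 0)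
    (hn1 : x2*x4 + x1*x5 ≠ 0) (hn2 : x2*x4*x6 + x2*x3*x4 + x1*x5*x6 ≠ 0)
    (hn3 : x2*x3*x4 + x0*x2*x4 + x0*x1*x5 ≠ 0)
    (hn4 : x2*x3*x4*x6 + x2*x3^2*x4 + x0*x2*x4*x6 + x0*x2*x3*x4 + x0*x1*x5*x6 ≠ 0)
    (hn5 : x3 + x0 ≠ 0) (hn6 : x6 + x3 ≠ 0) :
    mutate ((![x0, x1, x2, x3, x4, x5, x6] : Fin 7 → F), Bm0) 3 = ((![x0, x1, x2, (x2*x4 + x1*x5)/x3, x4, x5, x6] : Fin 7 → F), Bm1) := by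
  rw [mutate, Prod.mk.injEq]
  refine ⟨?_, by show mutateB Bm0 3 = Bm1; decide⟩
  funext i
  fin_cases i
  · rfl
  · rfl
  · rfl
  · show ((x0) ^ ((Bm0 0 3).toNat) * ((x1) ^ ((Bm0 1 3).toNat) * ((x2) ^ ((Bm0 2 3).toNat) * ((x3) ^ ((Bm0 3 3).toNat) * ((x4) ^ ((Bm0 4 3).toNat) * ((x5) ^ ((Bm0 5 3).toNat) * ((x6) ^ ((Bm0 6 3).toNat) * (1))))))) + (x0) ^ ((-Bm0 0 3).toNat) * ((x1) ^ ((-Bm0 1 3).toNat) * ((x2) ^ ((-Bm0 2 3).toNat) * ((x3) ^ ((-Bm0 3 3).toNat) * ((x4) ^ ((-Bm0 4 3).toNat) * ((x5) ^ ((-Bm0 5 3).toNat) * ((x6) ^ ((-Bm0 6 3).toNat) * (1)))))))) / (x3) = (x2*x4 + x1*x5)/x3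
    simp only [show ((Bm0 0 3).toNat) = 0 from rfl, show ((Bm0 1 3).toNat) = 1 from rfl, show ((Bm0 2 3).toNat) = 0 from rfl, show ((Bm0 3 3).toNat) = 0 from rfl, show ((Bm0 4 3).toNat) = 0 from rfl, show ((Bm0 5 3).toNat) = 1 from rfl, show ((Bm0 6 3).toNat) = 0 from rfl, show ((-Bm0 0 3).toNat) = 0 from rfl, show ((-Bm0 1 3).toNat) = 0 from rfl, show ((-Bm0 2 3).toNat) = 1 from rfl, show ((-Bm0 3 3).toNat) = 0 from rfl, show ((-Bm0 4 3).toNat) = 1 from rfl, show ((-Bm0 5 3).toNat) = 0 from rfl, show ((-Bm0 6 3).toNat) = 0 from rfl]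
    simp only [pow_zero, pow_one, one_mul, mul_one]
    field_simp
    try ring
  · rfl
  · rfl
  · rfl

private lemma step2 {F : Type*} [Field F] (x0 x1 x2 x3 x4 x5 x6 : F)
    (h0 : x0 ≠ 0) (h1 : x1 ≠ 0) (h2 : x2 ≠ 0) (h3 : x3 ≠ 0) (h4 : x4 ≠ 0) (h5 : x5 ≠ 0) (h6 : x6 ≠ 0)
    (hn1 : x2*x4 + x1*x5 ≠ 0) (hn2 : x2*x4*x6 + x2*x3*x4 + x1*x5*x6 ≠ 0)
    (hn3 : x2*x3*x4 + x0*x2*x4 + x0*x1*x5 ≠ 0)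
    (hn4 : x2*x3*x4*x6 + x2*x3^2*x4 + x0*x2*x4*x6 + x0*x2*x3*x4 + x0*x1*x5*x6 ≠ 0)
    (hn5 : x3 + x0 ≠ 0) (hn6 : x6 + x3 ≠ 0) :
    mutate ((![x0, x1, x2, (x2*x4 + x1*x5)/x3, x4, x5, x6] : Fin 7 → F), Bm1) 5 = ((![x0, x1, x2, (x2*x4 + x1*x5)/x3, x4, (x2*x4*x6 + x2*x3*x4 + x1*x5*x6)/(x3*x5), x6] : Fin 7 → F), Bm2) := by
  rw [mutate, Prod.mk.injEq]
  refine ⟨?_, by show mutateB Bm1 5 = Bm2; decide⟩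
  funext i
  fin_cases i
  · rfl
  · rfl
  · rfl
  · rfl
  · rfl
  · show ((x0) ^ ((Bm1 0 5).toNat) * ((x1) ^ ((Bm1 1 5).toNat) * ((x2) ^ ((Bm1 2 5).toNat) * (((x2*x4 + x1*x5)/x3) ^ ((Bm1 3 5).toNat) * ((x4) ^ ((Bm1 4 5).toNat) * ((x5) ^ ((Bm1 5 5).toNat) * ((x6) ^ ((Bm1 6 5).toNat) * (1))))))) + (x0) ^ ((-Bm1 0 5).toNat) * ((x1) ^ ((-Bm1 1 5).toNat) * ((x2) ^ ((-Bm1 2 5).toNat) * (((x2*x4 + x1*x5)/x3) ^ ((-Bm1 3 5).toNat) * ((x4) ^ ((-Bm1 4 5).toNat) * ((x5) ^ ((-Bm1 5 5).toNat) * ((x6) ^ ((-Bm1 6 5).toNat) * (1)))))))) / (x5) = (x2*x4*x6 + x2*x3*x4 + x1*x5*x6)/(x3*x5)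
    simp only [show ((Bm1 0 5).toNat) = 0 from rfl, show ((Bm1 1 5).toNat) = 0 from rfl, show ((Bm1 2 5).toNat) = 0 from rfl, show ((Bm1 3 5).toNat) = 1 from rfl, show ((Bm1 4 5).toNat) = 0 from rfl, show ((Bm1 5 5).toNat) = 0 from rfl, show ((Bm1 6 5).toNat) = 1 from rfl, show ((-Bm1 0 5).toNat) = 0 from rfl, show ((-Bm1 1 5).toNat) = 0 from rfl, show ((-Bm1 2 5).toNat) = 1 from rfl, show ((-Bm1 3 5).toNat) = 0 from rfl, show ((-Bm1 4 5).toNat) = 1 from rfl, show ((-Bm1 5 5).toNat) = 0 from rfl, show ((-Bm1 6 5).toNat) = 0 from rfl]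
    simp only [pow_zero, pow_one, one_mul, mul_one]
    field_simp
    try ring
  · rfl

private lemma step3 {F : Type*} [Field F] (x0 x1 x2 x3 x4 x5 x6 : F)
    (h0 : x0 ≠ 0) (h1 : x1 ≠ 0) (h2 : x2 ≠ 0) (h3 : x3 ≠ 0) (h4 : x4 ≠ 0) (h5 : x5 ≠ 0) (h6 : x6 ≠ 0)
    (hn1 : x2*x4 + x1*x5 ≠ 0) (hn2 : x2*x4*x6 + x2*x3*x4 + x1*x5*x6 ≠ 0)
    (hn3 : x2*x3*x4 + x0*x2*x4 + x0*x1*x5 ≠ 0)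
    (hn4 : x2*x3*x4*x6 + x2*x3^2*x4 + x0*x2*x4*x6 + x0*x2*x3*x4 + x0*x1*x5*x6 ≠ 0)
    (hn5 : x3 + x0 ≠ 0) (hn6 : x6 + x3 ≠ 0) :
    mutate ((![x0, x1, x2, (x2*x4 + x1*x5)/x3, x4, (x2*x4*x6 + x2*x3*x4 + x1*x5*x6)/(x3*x5), x6] : Fin 7 → F), Bm2) 1 = ((![x0, (x2*x3*x4 + x0*x2*x4 + x0*x1*x5)/(x1*x3), x2, (x2*x4 + x1*x5)/x3, x4, (x2*x4*x6 + x2*x3*x4 + x1*x5*x6)/(x3*x5), x6] : Fin 7 → F), Bm3) := by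
  rw [mutate, Prod.mk.injEq]
  refine ⟨?_, by show mutateB Bm2 1 = Bm3; decide⟩
  funext i
  fin_cases i
  · rfl
  · show ((x0) ^ ((Bm2 0 1).toNat) * ((x1) ^ ((Bm2 1 1).toNat) * ((x2) ^ ((Bm2 2 1).toNat) * (((x2*x4 + x1*x5)/x3) ^ ((Bm2 3 1).toNat) * ((x4) ^ ((Bm2 4 1).toNat) * (((x2*x4*x6 + x2*x3*x4 + x1*x5*x6)/(x3*x5)) ^ ((Bm2 5 1).toNat) * ((x6) ^ ((Bm2 6 1).toNat) * (1))))))) + (x0) ^ ((-Bm2 0 1).toNat) * ((x1) ^ ((-Bm2 1 1).toNat) * ((x2) ^ ((-Bm2 2 1).toNat) * (((x2*x4 + x1*x5)/x3) ^ ((-Bm2 3 1).toNat) * ((x4) ^ ((-Bm2 4 1).toNat) * (((x2*x4*x6 + x2*x3*x4 + x1*x5*x6)/(x3*x5)) ^ ((-Bm2 5 1).toNat) * ((x6) ^ ((-Bm2 6 1).toNat) * (1)))))))) / (x1) = (x2*x3*x4 + x0*x2*x4 + x0*x1*x5)/(x1*x3)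
    simp only [show ((Bm2 0 1).toNat) = 1 from rfl, show ((Bm2 1 1).toNat) = 0 from rfl, show ((Bm2 2 1).toNat) = 0 from rfl, show ((Bm2 3 1).toNat) = 1 from rfl, show ((Bm2 4 1).toNat) = 0 from rfl, show ((Bm2 5 1).toNat) = 0 from rfl, show ((Bm2 6 1).toNat) = 0 from rfl, show ((-Bm2 0 1).toNat) = 0 from rfl, show ((-Bm2 1 1).toNat) = 0 from rfl, show ((-Bm2 2 1).toNat) = 1 from rfl, show ((-Bm2 3 1).toNat) = 0 from rfl, show ((-Bm2 4 1).toNat) = 1 from rfl, show ((-Bm2 5 1).toNat) = 0 from rfl, show ((-Bm2 6 1).toNat) = 0 from rfl]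
    simp only [pow_zero, pow_one, one_mul, mul_one]
    field_simp
    try ring
  · rfl
  · rfl
  · rfl
  · rfl
  · rfl

private lemma step4 {F : Type*} [Field F] (x0 x1 x2 x3 x4 x5 x6 : F)
    (h0 : x0 ≠ 0) (h1 : x1 ≠ 0) (h2 : x2 ≠ 0) (h3 : x3 ≠ 0) (h4 : x4 ≠ 0) (h5 : x5 ≠ 0) (h6 : x6 ≠ 0)
    (hn1 : x2*x4 + x1*x5 ≠ 0) (hn2 : x2*x4*x6 + x2*x3*x4 + x1*x5*x6 ≠ 0)
    (hn3 : x2*x3*x4 + x0*x2*x4 + x0*x1*x5 ≠ 0)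
    (hn4 : x2*x3*x4*x6 + x2*x3^2*x4 + x0*x2*x4*x6 + x0*x2*x3*x4 + x0*x1*x5*x6 ≠ 0)
    (hn5 : x3 + x0 ≠ 0) (hn6 : x6 + x3 ≠ 0) :
    mutate ((![x0, (x2*x3*x4 + x0*x2*x4 + x0*x1*x5)/(x1*x3), x2, (x2*x4 + x1*x5)/x3, x4, (x2*x4*x6 + x2*x3*x4 + x1*x5*x6)/(x3*x5), x6] : Fin 7 → F), Bm3) 3 = ((![x0, (x2*x3*x4 + x0*x2*x4 + x0*x1*x5)/(x1*x3), x2, (x2*x3*x4*x6 + x2*x3^2*x4 + x0*x2*x4*x6 + x0*x2*x3*x4 + x0*x1*x5*x6)/(x1*x3*x5), x4, (x2*x4*x6 + x2*x3*x4 + x1*x5*x6)/(x3*x5), x6] : Fin 7 → F), Bm4) := by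
  rw [mutate, Prod.mk.injEq]
  refine ⟨?_, by show mutateB Bm3 3 = Bm4; decide⟩
  funext i
  fin_cases i
  · rfl
  · rfl
  · rfl
  · show ((x0) ^ ((Bm3 0 3).toNat) * (((x2*x3*x4 + x0*x2*x4 + x0*x1*x5)/(x1*x3)) ^ ((Bm3 1 3).toNat) * ((x2) ^ ((Bm3 2 3).toNat) * (((x2*x4 + x1*x5)/x3) ^ ((Bm3 3 3).toNat) * ((x4) ^ ((Bm3 4 3).toNat) * (((x2*x4*x6 + x2*x3*x4 + x1*x5*x6)/(x3*x5)) ^ ((Bm3 5 3).toNat) * ((x6) ^ ((Bm3 6 3).toNat) * (1))))))) + (x0) ^ ((-Bm3 0 3).toNat) * (((x2*x3*x4 + x0*x2*x4 + x0*x1*x5)/(x1*x3)) ^ ((-Bm3 1 3).toNat) * ((x2) ^ ((-Bm3 2 3).toNat) * (((x2*x4 + x1*x5)/x3) ^ ((-Bm3 3 3).toNat) * ((x4) ^ ((-Bm3 4 3).toNat) * (((x2*x4*x6 + x2*x3*x4 + x1*x5*x6)/(x3*x5)) ^ ((-Bm3 5 3).toNat) * ((x6) ^ ((-Bm3 6 3).toNat)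 * (1)))))))) / ((x2*x4 + x1*x5)/x3) = (x2*x3*x4*x6 + x2*x3^2*x4 + x0*x2*x4*x6 + x0*x2*x3*x4 + x0*x1*x5*x6)/(x1*x3*x5)
    simp only [show ((Bm3 0 3).toNat) = 0 from rfl, show ((Bm3 1 3).toNat) = 1 from rfl, show ((Bm3 2 3).toNat) = 0 from rfl, show ((Bm3 3 3).toNat) = 0 from rfl, show ((Bm3 4 3).toNat) = 0 from rfl, show ((Bm3 5 3).toNat) = 1 from rfl, show ((Bm3 6 3).toNat) = 0 from rfl, show ((-Bm3 0 3).toNat) = 0 from rfl, show ((-Bm3 1 3).toNat) = 0 from rfl, show ((-Bm3 2 3).toNat) = 1 from rfl, show ((-Bm3 3 3).toNat) = 0 from rfl, show ((-Bm3 4 3).toNat) = 1 from rfl, show ((-Bm3 5 3).toNat) = 0 from rfl, show ((-Bm3 6 3).toNat) = 0 from rfl]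
    simp only [pow_zero, pow_one, one_mul, mul_one]
    field_simp
    try ring
  · rfl
  · rfl
  · rfl

private lemma step5 {F : Type*} [Field F] (x0 x1 x2 x3 x4 x5 x6 : F)
    (h0 : x0 ≠ 0) (h1 : x1 ≠ 0) (h2 : x2 ≠ 0) (h3 : x3 ≠ 0) (h4 : x4 ≠ 0) (h5 : x5 ≠ 0) (h6 : x6 ≠ 0)
    (hn1 : x2*x4 + x1*x5 ≠ 0) (hn2 : x2*x4*x6 + x2*x3*x4 + x1*x5*x6 ≠ 0)
    (hn3 : x2*x3*x4 + x0*x2*x4 + x0*x1*x5 ≠ 0)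
    (hn4 : x2*x3*x4*x6 + x2*x3^2*x4 + x0*x2*x4*x6 + x0*x2*x3*x4 + x0*x1*x5*x6 ≠ 0)
    (hn5 : x3 + x0 ≠ 0) (hn6 : x6 + x3 ≠ 0) :
    mutate ((![x0, (x2*x3*x4 + x0*x2*x4 + x0*x1*x5)/(x1*x3), x2, (x2*x3*x4*x6 + x2*x3^2*x4 + x0*x2*x4*x6 + x0*x2*x3*x4 + x0*x1*x5*x6)/(x1*x3*x5), x4, (x2*x4*x6 + x2*x3*x4 + x1*x5*x6)/(x3*x5), x6] : Fin 7 → F), Bm4) 5 = ((![x0, (x2*x3*x4 + x0*x2*x4 + x0*x1*x5)/(x1*x3), x2, (x2*x3*x4*x6 + x2*x3^2*x4 + x0*x2*x4*x6 + x0*x2*x3*x4 + x0*x1*x5*x6)/(x1*x3*x5), x4, (x3 + x0)/x1, x6] : Fin 7 → F), Bm5) := by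
  rw [mutate, Prod.mk.injEq]
  refine ⟨?_, by show mutateB Bm4 5 = Bm5; decide⟩
  funext i
  fin_cases i
  · rfl
  · rfl
  · rfl
  · rfl
  · rfl
  · show ((x0) ^ ((Bm4 0 5).toNat) * (((x2*x3*x4 + x0*x2*x4 + x0*x1*x5)/(x1*x3)) ^ ((Bm4 1 5).toNat) * ((x2) ^ ((Bm4 2 5).toNat) * (((x2*x3*x4*x6 + x2*x3^2*x4 + x0*x2*x4*x6 + x0*x2*x3*x4 + x0*x1*x5*x6)/(x1*x3*x5)) ^ ((Bm4 3 5).toNat) * ((x4) ^ ((Bm4 4 5).toNat) * (((x2*x4*x6 + x2*x3*x4 + x1*x5*x6)/(x3*x5)) ^ ((Bm4 5 5).toNat) * ((x6) ^ ((Bm4 6 5).toNat) * (1))))))) + (x0) ^ ((-Bm4 0 5).toNat) * (((x2*x3*x4 + x0*x2*x4 + x0*x1*x5)/(x1*x3)) ^ ((-Bm4 1 5).toNat) * ((x2) ^ ((-Bm4 2 5).toNat) * (((x2*x3*x4*x6 + x2*x3^2*x4 + x0*x2*x4*x6 + x0*x2*x3*x4 + x0*x1*x5*x6)/(x1*x3*x5))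 ^ ((-Bm4 3 5).toNat) * ((x4) ^ ((-Bm4 4 5).toNat) * (((x2*x4*x6 + x2*x3*x4 + x1*x5*x6)/(x3*x5)) ^ ((-Bm4 5 5).toNat) * ((x6) ^ ((-Bm4 6 5).toNat) * (1)))))))) / ((x2*x4*x6 + x2*x3*x4 + x1*x5*x6)/(x3*x5)) = (x3 + x0)/x1
    simp only [show ((Bm4 0 5).toNat) = 0 from rfl, show ((Bm4 1 5).toNat) = 0 from rfl, show ((Bm4 2 5).toNat) = 0 from rfl, show ((Bm4 3 5).toNat) = 1 from rfl, show ((Bm4 4 5).toNat) = 0 from rfl, show ((Bm4 5 5).toNat) = 0 from rfl, show ((Bm4 6 5).toNat) = 0 from rfl, show ((-Bm4 0 5).toNat) = 0 from rfl, show ((-Bm4 1 5).toNat) = 0 from rfl, show ((-Bm4 2 5).toNat) = 0 from rfl, show ((-Bm4 3 5).toNat) = 0 from rfl, show ((-Bm4 4 5).toNat) = 0 from rfl, show ((-Bm4 5 5).toNat) = 0 from rfl, show ((-Bm4 6 5).toNat) = 1 from rfl]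
    simp only [pow_zero, pow_one, one_mul, mul_one]
    field_simp
    try ring
    simp only [← add_mul]
    rw [mul_inv_eq_iff_eq_mul₀]
    · ring
    · intro h; apply hn2; linear_combination h
  · rfl

private lemma step6 {F : Type*} [Field F] (x0 x1 x2 x3 x4 x5 x6 : F)
    (h0 : x0 ≠ 0) (h1 : x1 ≠ 0) (h2 : x2 ≠ 0) (h3 : x3 ≠ 0) (h4 : x4 ≠ 0) (h5 : x5 ≠ 0) (h6 : x6 ≠ 0)
    (hn1 : x2*x4 + x1*x5 ≠ 0) (hn2 : x2*x4*x6 + x2*x3*x4 + x1*x5*x6 ≠ 0)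
    (hn3 : x2*x3*x4 + x0*x2*x4 + x0*x1*x5 ≠ 0)
    (hn4 : x2*x3*x4*x6 + x2*x3^2*x4 + x0*x2*x4*x6 + x0*x2*x3*x4 + x0*x1*x5*x6 ≠ 0)
    (hn5 : x3 + x0 ≠ 0) (hn6 : x6 + x3 ≠ 0) :
    mutate ((![x0, (x2*x3*x4 + x0*x2*x4 + x0*x1*x5)/(x1*x3), x2, (x2*x3*x4*x6 + x2*x3^2*x4 + x0*x2*x4*x6 + x0*x2*x3*x4 + x0*x1*x5*x6)/(x1*x3*x5), x4, (x3 + x0)/x1, x6] : Fin 7 → F), Bm5) 1 = ((![x0, (x6 + x3)/x5, x2, (x2*x3*x4*x6 + x2*x3^2*x4 + x0*x2*x4*x6 + x0*x2*x3*x4 + x0*x1*x5*x6)/(x1*x3*x5), x4, (x3 + x0)/x1, x6] : Fin 7 → F), Bm6) := by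
  rw [mutate, Prod.mk.injEq]
  refine ⟨?_, by show mutateB Bm5 1 = Bm6; decide⟩
  funext i
  fin_cases i
  · rfl
  · show ((x0) ^ ((Bm5 0 1).toNat) * (((x2*x3*x4 + x0*x2*x4 + x0*x1*x5)/(x1*x3)) ^ ((Bm5 1 1).toNat) * ((x2) ^ ((Bm5 2 1).toNat) * (((x2*x3*x4*x6 + x2*x3^2*x4 + x0*x2*x4*x6 + x0*x2*x3*x4 + x0*x1*x5*x6)/(x1*x3*x5)) ^ ((Bm5 3 1).toNat) * ((x4) ^ ((Bm5 4 1).toNat) * (((x3 + x0)/x1) ^ ((Bm5 5 1).toNat) * ((x6) ^ ((Bm5 6 1).toNat) * (1))))))) + (x0) ^ ((-Bm5 0 1).toNat) * (((x2*x3*x4 + x0*x2*x4 + x0*x1*x5)/(x1*x3)) ^ ((-Bm5 1 1).toNat) * ((x2) ^ ((-Bm5 2 1).toNat) * (((x2*x3*x4*x6 + x2*x3^2*x4 + x0*x2*x4*x6 + x0*x2*x3*x4 + x0*x1*x5*x6)/(x1*x3*x5)) ^ ((-Bm5 3 1).toNat) * ((x4) ^ ((-Bm5 4 1).toNat) * (((x3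 + x0)/x1) ^ ((-Bm5 5 1).toNat) * ((x6) ^ ((-Bm5 6 1).toNat) * (1)))))))) / ((x2*x3*x4 + x0*x2*x4 + x0*x1*x5)/(x1*x3)) = (x6 + x3)/x5
    simp only [show ((Bm5 0 1).toNat) = 0 from rfl, show ((Bm5 1 1).toNat) = 0 from rfl, show ((Bm5 2 1).toNat) = 0 from rfl, show ((Bm5 3 1).toNat) = 1 from rfl, show ((Bm5 4 1).toNat) = 0 from rfl, show ((Bm5 5 1).toNat) = 0 from rfl, show ((Bm5 6 1).toNat) = 0 from rfl, show ((-Bm5 0 1).toNat) = 1 from rfl, show ((-Bm5 1 1).toNat) = 0 from rfl, show ((-Bm5 2 1).toNat) = 0 from rfl, show ((-Bm5 3 1).toNat) = 0 from rfl, show ((-Bm5 4 1).toNat) = 0 from rfl, show ((-Bm5 5 1).toNat) = 0 from rfl, show ((-Bm5 6 1).toNat) = 0 from rfl]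
    simp only [pow_zero, pow_one, one_mul, mul_one]
    field_simp
    try ring
    simp only [← add_mul]
    rw [mul_inv_eq_iff_eq_mul₀]
    · ring
    · intro h; apply hn3; linear_combination h
  · rfl
  · rfl
  · rfl
  · rfl
  · rfl

private lemma step7 {F : Type*} [Field F] (x0 x1 x2 x3 x4 x5 x6 : F)
    (h0 : x0 ≠ 0) (h1 : x1 ≠ 0) (h2 : x2 ≠ 0) (h3 : x3 ≠ 0) (h4 : x4 ≠ 0) (h5 : x5 ≠ 0) (h6 : x6 ≠ 0)
    (hn1 : x2*x4 + x1*x5 ≠ 0) (hn2 : x2*x4*x6 + x2*x3*x4 + x1*x5*x6 ≠ 0)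
    (hn3 : x2*x3*x4 + x0*x2*x4 + x0*x1*x5 ≠ 0)
    (hn4 : x2*x3*x4*x6 + x2*x3^2*x4 + x0*x2*x4*x6 + x0*x2*x3*x4 + x0*x1*x5*x6 ≠ 0)
    (hn5 : x3 + x0 ≠ 0) (hn6 : x6 + x3 ≠ 0) :
    mutate ((![x0, (x6 + x3)/x5, x2, (x2*x3*x4*x6 + x2*x3^2*x4 + x0*x2*x4*x6 + x0*x2*x3*x4 + x0*x1*x5*x6)/(x1*x3*x5), x4, (x3 + x0)/x1, x6] : Fin 7 → F), Bm6) 3 = ((![x0, (x6 + x3)/x5, x2, x3, x4, (x3 + x0)/x1, x6] : Fin 7 → F), Bm7) := by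
  rw [mutate, Prod.mk.injEq]
  refine ⟨?_, by show mutateB Bm6 3 = Bm7; decide⟩
  funext i
  fin_cases i
  · rfl
  · rfl
  · rfl
  · show ((x0) ^ ((Bm6 0 3).toNat) * (((x6 + x3)/x5) ^ ((Bm6 1 3).toNat) * ((x2) ^ ((Bm6 2 3).toNat) * (((x2*x3*x4*x6 + x2*x3^2*x4 + x0*x2*x4*x6 + x0*x2*x3*x4 + x0*x1*x5*x6)/(x1*x3*x5)) ^ ((Bm6 3 3).toNat) * ((x4) ^ ((Bm6 4 3).toNat) * (((x3 + x0)/x1) ^ ((Bm6 5 3).toNat) * ((x6) ^ ((Bm6 6 3).toNat) * (1))))))) + (x0) ^ ((-Bm6 0 3).toNat) * (((x6 + x3)/x5) ^ ((-Bm6 1 3).toNat) * ((x2) ^ ((-Bm6 2 3).toNat) * (((x2*x3*x4*x6 + x2*x3^2*x4 + x0*x2*x4*x6 + x0*x2*x3*x4 + x0*x1*x5*x6)/(x1*x3*x5)) ^ ((-Bm6 3 3).toNat) * ((x4) ^ ((-Bm6 4 3).toNat) * (((x3 + x0)/x1) ^ ((-Bm6 5 3).toNat) * ((x6) ^ ((-Bm6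 6 3).toNat) * (1)))))))) / ((x2*x3*x4*x6 + x2*x3^2*x4 + x0*x2*x4*x6 + x0*x2*x3*x4 + x0*x1*x5*x6)/(x1*x3*x5)) = x3
    simp only [show ((Bm6 0 3).toNat) = 0 from rfl, show ((Bm6 1 3).toNat) = 1 from rfl, show ((Bm6 2 3).toNat) = 1 from rfl, show ((Bm6 3 3).toNat) = 0 from rfl, show ((Bm6 4 3).toNat) = 1 from rfl, show ((Bm6 5 3).toNat) = 1 from rfl, show ((Bm6 6 3).toNat) = 0 from rfl, show ((-Bm6 0 3).toNat) = 1 from rfl, show ((-Bm6 1 3).toNat) = 0 from rfl, show ((-Bm6 2 3).toNat) = 0 from rfl, show ((-Bm6 3 3).toNat) = 0 from rfl, show ((-Bm6 4 3).toNat) = 0 from rfl, show ((-Bm6 5 3).toNat) = 0 from rfl, show ((-Bm6 6 3).toNat) = 1 from rfl]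
    simp only [pow_zero, pow_one, one_mul, mul_one]
    field_simp
    try ring
    simp only [← add_mul]
    rw [mul_inv_eq_iff_eq_mul₀]
    · ring
    · intro h; apply hn4; linear_combination h
  · rfl
  · rfl
  · rfl

private lemma step8 {F : Type*} [Field F] (x0 x1 x2 x3 x4 x5 x6 : F)
    (h0 : x0 ≠ 0) (h1 : x1 ≠ 0) (h2 : x2 ≠ 0) (h3 : x3 ≠ 0) (h4 : x4 ≠ 0) (h5 : x5 ≠ 0) (h6 : x6 ≠ 0)
    (hn1 : x2*x4 + x1*x5 ≠ 0) (hn2 : x2*x4*x6 + x2*x3*x4 + x1*x5*x6 ≠ 0)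
    (hn3 : x2*x3*x4 + x0*x2*x4 + x0*x1*x5 ≠ 0)
    (hn4 : x2*x3*x4*x6 + x2*x3^2*x4 + x0*x2*x4*x6 + x0*x2*x3*x4 + x0*x1*x5*x6 ≠ 0)
    (hn5 : x3 + x0 ≠ 0) (hn6 : x6 + x3 ≠ 0) :
    mutate ((![x0, (x6 + x3)/x5, x2, x3, x4, (x3 + x0)/x1, x6] : Fin 7 → F), Bm7) 5 = ((![x0, (x6 + x3)/x5, x2, x3, x4, x1, x6] : Fin 7 → F), Bm8) := by
  rw [mutate, Prod.mk.injEq]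
  refine ⟨?_, by show mutateB Bm7 5 = Bm8; decide⟩
  funext i
  fin_cases i
  · rfl
  · rfl
  · rfl
  · rfl
  · rfl
  · show ((x0) ^ ((Bm7 0 5).toNat) * (((x6 + x3)/x5) ^ ((Bm7 1 5).toNat) * ((x2) ^ ((Bm7 2 5).toNat) * ((x3) ^ ((Bm7 3 5).toNat) * ((x4) ^ ((Bm7 4 5).toNat) * (((x3 + x0)/x1) ^ ((Bm7 5 5).toNat) * ((x6) ^ ((Bm7 6 5).toNat) * (1))))))) + (x0) ^ ((-Bm7 0 5).toNat) * (((x6 + x3)/x5) ^ ((-Bm7 1 5).toNat) * ((x2) ^ ((-Bm7 2 5).toNat) * ((x3) ^ ((-Bm7 3 5).toNat) * ((x4) ^ ((-Bm7 4 5).toNat) * (((x3 + x0)/x1) ^ ((-Bm7 5 5).toNat) * ((x6) ^ ((-Bm7 6 5).toNat) * (1)))))))) / ((x3 + x0)/x1) = x1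
    simp only [show ((Bm7 0 5).toNat) = 0 from rfl, show ((Bm7 1 5).toNat) = 0 from rfl, show ((Bm7 2 5).toNat) = 0 from rfl, show ((Bm7 3 5).toNat) = 1 from rfl, show ((Bm7 4 5).toNat) = 0 from rfl, show ((Bm7 5 5).toNat) = 0 from rfl, show ((Bm7 6 5).toNat) = 0 from rfl, show ((-Bm7 0 5).toNat) = 1 from rfl, show ((-Bm7 1 5).toNat) = 0 from rfl, show ((-Bm7 2 5).toNat) = 0 from rfl, show ((-Bm7 3 5).toNat) = 0 from rfl, show ((-Bm7 4 5).toNat) = 0 from rfl, show ((-Bm7 5 5).toNat) = 0 from rfl, show ((-Bm7 6 5).toNat) = 0 from rfl]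
    simp only [pow_zero, pow_one, one_mul, mul_one]
    field_simp
    try ring
  · rfl

private lemma step9 {F : Type*} [Field F] (x0 x1 x2 x3 x4 x5 x6 : F)
    (h0 : x0 ≠ 0) (h1 : x1 ≠ 0) (h2 : x2 ≠ 0) (h3 : x3 ≠ 0) (h4 : x4 ≠ 0) (h5 : x5 ≠ 0) (h6 : x6 ≠ 0)
    (hn1 : x2*x4 + x1*x5 ≠ 0) (hn2 : x2*x4*x6 + x2*x3*x4 + x1*x5*x6 ≠ 0)
    (hn3 : x2*x3*x4 + x0*x2*x4 + x0*x1*x5 ≠ 0)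
    (hn4 : x2*x3*x4*x6 + x2*x3^2*x4 + x0*x2*x4*x6 + x0*x2*x3*x4 + x0*x1*x5*x6 ≠ 0)
    (hn5 : x3 + x0 ≠ 0) (hn6 : x6 + x3 ≠ 0) :
    mutate ((![x0, (x6 + x3)/x5, x2, x3, x4, x1, x6] : Fin 7 → F), Bm8) 1 = ((![x0, x5, x2, x3, x4, x1, x6] : Fin 7 → F), Bm9) := by
  rw [mutate, Prod.mk.injEq]
  refine ⟨?_, by show mutateB Bm8 1 = Bm9; decide⟩
  funext i
  fin_cases i
  · rfl
  · show ((x0) ^ ((Bm8 0 1).toNat) * (((x6 + x3)/x5) ^ ((Bm8 1 1).toNat) * ((x2) ^ ((Bm8 2 1).toNat) * ((x3) ^ ((Bm8 3 1).toNat) * ((x4) ^ ((Bm8 4 1).toNat) * ((x1) ^ ((Bm8 5 1).toNat) * ((x6) ^ ((Bm8 6 1).toNat) * (1))))))) + (x0) ^ ((-Bm8 0 1).toNat) * (((x6 + x3)/x5) ^ ((-Bm8 1 1).toNat) * ((x2) ^ ((-Bm8 2 1).toNat) * ((x3) ^ ((-Bm8 3 1).toNat) * ((x4) ^ ((-Bm8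 4 1).toNat) * ((x1) ^ ((-Bm8 5 1).toNat) * ((x6) ^ ((-Bm8 6 1).toNat) * (1)))))))) / ((x6 + x3)/x5) = x5
    simp only [show ((Bm8 0 1).toNat) = 0 from rfl, show ((Bm8 1 1).toNat) = 0 from rfl, show ((Bm8 2 1).toNat) = 0 from rfl, show ((Bm8 3 1).toNat) = 1 from rfl, show ((Bm8 4 1).toNat) = 0 from rfl, show ((Bm8 5 1).toNat) = 0 from rfl, show ((Bm8 6 1).toNat) = 0 from rfl, show ((-Bm8 0 1).toNat) = 0 from rfl, show ((-Bm8 1 1).toNat) = 0 from rfl, show ((-Bm8 2 1).toNat) = 0 from rfl, show ((-Bm8 3 1).toNat) = 0 from rfl, show ((-Bm8 4 1).toNat) = 0 from rfl, show ((-Bm8 5 1).toNat) = 0 from rfl, show ((-Bm8 6 1).toNat) = 1 from rfl]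
    simp only [pow_zero, pow_one, one_mul, mul_one]
    field_simp
    try ring
  · rfl
  · rfl
  · rfl
  · rfl
  · rfl

/-- the periodicity `s_{2,6} ∘ (μ_2 ∘ μ_6 ∘ μ_4)³ = id`: applying
`μ_4, μ_6, μ_2` in that order three times and then transposing indices 2 and 6
(0-based: mutations at `3, 5, 1` and the swap `swapSeed 1 5`) returns the seed. -/
theorem periodicity_264 {F : Type*} [Field F]
    (x : Fin 7 → F) (hx : AlgebraicIndependent ℤ x) :
    swapSeed 1 5
      (mutate (mutate (mutate
        (mutate (mutate (mutate
          (mutate (mutate (mutate (x, B7) 3) 5) 1) 3) 5) 1) 3) 5) 1)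
      = (x, B7) := by
  have key : ∀ p : MvPolynomial (Fin 7) ℤ, MvPolynomial.eval (fun _ => (1:ℤ)) p ≠ 0 →
      MvPolynomial.aeval x p ≠ 0 := fun p hp => ne_zero_of_aeval hx p hp
  have h0 : x 0 ≠ 0 := by
    have H := key (MvPolynomial.X 0) (by simp)
    simp only [MvPolynomial.aeval_X] at H
    exact H
  have h1 : x 1 ≠ 0 := by
    have H := key (MvPolynomial.X 1) (by simp)
    simp only [MvPolynomial.aeval_X] at H
    exact H
  have h2 : x 2 ≠ 0 := by
    have H := key (MvPolynomial.X 2) (by simp)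
    simp only [MvPolynomial.aeval_X] at H
    exact H
  have h3 : x 3 ≠ 0 := by
    have H := key (MvPolynomial.X 3) (by simp)
    simp only [MvPolynomial.aeval_X] at H
    exact H
  have h4 : x 4 ≠ 0 := by
    have H := key (MvPolynomial.X 4) (by simp)
    simp only [MvPolynomial.aeval_X] at H
    exact H
  have h5 : x 5 ≠ 0 := by
    have H := key (MvPolynomial.X 5) (by simp)
    simp only [MvPolynomial.aeval_X] at H
    exact H
  have h6 : x 6 ≠ 0 := by
    have H := key (MvPolynomial.X 6) (by simp)
    simp only [MvPolynomial.aeval_X] at H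
    exact H
  have hn1 : x 2*x 4 + x 1*x 5 ≠ 0 := by
    have H := key (MvPolynomial.X 2*MvPolynomial.X 4 + MvPolynomial.X 1*MvPolynomial.X 5) (by norm_num)
    simp only [_root_.map_add, _root_.map_mul, _root_.map_pow, MvPolynomial.aeval_X] at H
    exact H
  have hn2 : x 2*x 4*x 6 + x 2*x 3*x 4 + x 1*x 5*x 6 ≠ 0 := by
    have H := key (MvPolynomial.X 2*MvPolynomial.X 4*MvPolynomial.X 6 + MvPolynomial.X 2*MvPolynomial.X 3*MvPolynomial.X 4 + MvPolynomial.X 1*MvPolynomial.X 5*MvPolynomial.X 6) (by norm_num)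
    simp only [_root_.map_add, _root_.map_mul, _root_.map_pow, MvPolynomial.aeval_X] at H
    exact H
  have hn3 : x 2*x 3*x 4 + x 0*x 2*x 4 + x 0*x 1*x 5 ≠ 0 := by
    have H := key (MvPolynomial.X 2*MvPolynomial.X 3*MvPolynomial.X 4 + MvPolynomial.X 0*MvPolynomial.X 2*MvPolynomial.X 4 + MvPolynomial.X 0*MvPolynomial.X 1*MvPolynomial.X 5) (by norm_num)
    simp only [_root_.map_add, _root_.map_mul, _root_.map_pow, MvPolynomial.aeval_X] at H
    exact H
  have hn4 : x 2*x 3*x 4*x 6 + x 2*(x 3)^2*x 4 + x 0*x 2*x 4*x 6 + x 0*x 2*x 3*x 4 + x 0*x 1*x 5*x 6 ≠ 0 := by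
    have H := key (MvPolynomial.X 2*MvPolynomial.X 3*MvPolynomial.X 4*MvPolynomial.X 6 + MvPolynomial.X 2*(MvPolynomial.X 3)^2*MvPolynomial.X 4 + MvPolynomial.X 0*MvPolynomial.X 2*MvPolynomial.X 4*MvPolynomial.X 6 + MvPolynomial.X 0*MvPolynomial.X 2*MvPolynomial.X 3*MvPolynomial.X 4 + MvPolynomial.X 0*MvPolynomial.X 1*MvPolynomial.X 5*MvPolynomial.X 6) (by norm_num)
    simp only [_root_.map_add, _root_.map_mul, _root_.map_pow, MvPolynomial.aeval_X] at H
    exact H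
  have hn5 : x 3 + x 0 ≠ 0 := by
    have H := key (MvPolynomial.X 3 + MvPolynomial.X 0) (by norm_num)
    simp only [_root_.map_add, _root_.map_mul, _root_.map_pow, MvPolynomial.aeval_X] at H
    exact H
  have hn6 : x 6 + x 3 ≠ 0 := by
    have H := key (MvPolynomial.X 6 + MvPolynomial.X 3) (by norm_num)
    simp only [_root_.map_add, _root_.map_mul, _root_.map_pow, MvPolynomial.aeval_X] at H
    exact H
  have hpair : ((x, B7) : Seed F 7)
      = ((![x 0, x 1, x 2, x 3, x 4, x 5, x 6] : Fin 7 → F), Bm0) := by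
    rw [Prod.mk.injEq]
    exact ⟨by funext i; fin_cases i <;> rfl, rfl⟩
  rw [hpair]
  rw [step1 (x 0) (x 1) (x 2) (x 3) (x 4) (x 5) (x 6) h0 h1 h2 h3 h4 h5 h6 hn1 hn2 hn3 hn4 hn5 hn6]
  rw [step2 (x 0) (x 1) (x 2) (x 3) (x 4) (x 5) (x 6) h0 h1 h2 h3 h4 h5 h6 hn1 hn2 hn3 hn4 hn5 hn6]
  rw [step3 (x 0) (x 1) (x 2) (x 3) (x 4) (x 5) (x 6) h0 h1 h2 h3 h4 h5 h6 hn1 hn2 hn3 hn4 hn5 hn6]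
  rw [step4 (x 0) (x 1) (x 2) (x 3) (x 4) (x 5) (x 6) h0 h1 h2 h3 h4 h5 h6 hn1 hn2 hn3 hn4 hn5 hn6]
  rw [step5 (x 0) (x 1) (x 2) (x 3) (x 4) (x 5) (x 6) h0 h1 h2 h3 h4 h5 h6 hn1 hn2 hn3 hn4 hn5 hn6]
  rw [step6 (x 0) (x 1) (x 2) (x 3) (x 4) (x 5) (x 6) h0 h1 h2 h3 h4 h5 h6 hn1 hn2 hn3 hn4 hn5 hn6]
  rw [step7 (x 0) (x 1) (x 2) (x 3) (x 4) (x 5) (x 6) h0 h1 h2 h3 h4 h5 h6 hn1 hn2 hn3 hn4 hn5 hn6]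
  rw [step8 (x 0) (x 1) (x 2) (x 3) (x 4) (x 5) (x 6) h0 h1 h2 h3 h4 h5 h6 hn1 hn2 hn3 hn4 hn5 hn6]
  rw [step9 (x 0) (x 1) (x 2) (x 3) (x 4) (x 5) (x 6) h0 h1 h2 h3 h4 h5 h6 hn1 hn2 hn3 hn4 hn5 hn6]
  rw [swapSeed, Prod.mk.injEq]
  refine ⟨?_, by show (Matrix.of fun a b => Bm9 (Equiv.swap 1 5 a) (Equiv.swap 1 5 b)) = Bm0; decide⟩
  funext i
  fin_cases i <;> rfl
end
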